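/- arXiv:1109.2462 — 2 statements merged into one kernel-verified Lean document; each statement's English description precedes it below -/
import Mathlib

section
/- Let k be a field of characteristic p > 0, n ≥ 1 and m ≥ 0. In the algebra A = k[y]/(y^{2p^n}) # (kℤ_{p^m})*, where the group algebra dual (kℤ_{p^m})* acts diagonally on k[y]/(y^{2p^n}) preserving the line ky, the Jacobson radical equals (y)·A, the quotient A/J(A) ≅ (kℤ_{p^m})*, and J(A)/J(A)² ≅ (kℤ_{p^m})* as an A/J(A)-bimodule. Consequently A is a Nakayama algebra whose Gabriel quiver is a single oriented cycle with p^m vertices. -/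
set_option linter.unusedSectionVars false
set_option linter.unusedVariables false
set_option maxHeartbeats 2000000



/-!
STATEMENT 12: Let `k` be a field of characteristic `p > 0`, `n ≥ 1`, `m ≥ 0`, and let
`A = k[y]/(y^{2pⁿ}) # (kℤ_{p^m})*` be the smash product where the dual group algebra acts
diagonally preserving the line `ky`.  Concretely, `A` is presented by an element `Y`
(the class of `y`) and a complete set of orthogonal idempotents `e i` (`i ∈ ℤ/p^m`, the
dual basis of the group algebra) with `Y e i = e (i+1) Y`, `Y^{2pⁿ} = 0` and `k`-basis
`{Y^a e i}`.  Then the Jacobson radical of `A` equals the ideal `(Y)`,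
`A/J(A) ≅ (kℤ_{p^m})* = (ℤ/p^m → k)`, `J/J²` has basis the classes of the `Y e j`
(so `J/J² ≅ (kℤ_{p^m})*` as a bimodule, the arrows `j → j+1` of a cycle), and
consequently `A` is a Nakayama algebra whose Gabriel quiver is a single oriented cycle
with `p^m` vertices.
-/

/-- A module is indecomposable if it is nonzero and admits no nontrivial direct sum
decomposition. -/
def IsIndecomposableModule (A M : Type) [Ring A] [AddCommGroup M] [Module A M] : Prop :=
  Nontrivial M ∧ ∀ N₁ N₂ : Submodule A M, IsCompl N₁ N₂ → N₁ = ⊥ ∨ N₂ = ⊥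

/-- A module is uniserial if its submodules are totally ordered by inclusion. -/
def IsUniserialModule (A M : Type) [Ring A] [AddCommGroup M] [Module A M] : Prop :=
  ∀ N₁ N₂ : Submodule A M, N₁ ≤ N₂ ∨ N₂ ≤ N₁

/-- A Nakayama algebra: every indecomposable finitely generated module is uniserial. -/
def IsNakayamaAlgebra (A : Type) [Ring A] : Prop :=
  ∀ (M : Type) [AddCommGroup M] [Module A M],
    Module.Finite A M → IsIndecomposableModule A M → IsUniserialModule A M


section AuxRing
variable {s : ℕ} {A : Type} [Ring A] {Y : A} {e : ZMod s → A}

lemma aux_eY (hskew : ∀ i, Y * e i = e (i + 1) * Y) (i : ZMod s) :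
    e i * Y = Y * e (i - 1) := by
  have := hskew (i - 1); rw [sub_add_cancel] at this; rw [this]


lemma aux_eYpow (hskew : ∀ i, Y * e i = e (i + 1) * Y) (i : ZMod s) (a : ℕ) :
    e i * Y ^ a = Y ^ a * e (i - (a : ZMod s)) := by
  induction a with
  | zero => simp
  | succ a ih =>
    rw [pow_succ, ← mul_assoc, ih, mul_assoc, aux_eY hskew, ← mul_assoc, ← pow_succ]
    push_cast
    rw [sub_sub]


lemma aux_Ypow_e (hskew : ∀ i, Y * e i = e (i + 1) * Y) (i : ZMod s) (a : ℕ) :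
    Y ^ a * e i = e (i + (a : ZMod s)) * Y ^ a := by
  rw [aux_eYpow hskew, add_sub_cancel_right]


end AuxRing

section Aux
variable {k : Type} [Field k] {p n m : ℕ} [NeZero (p ^ m)]
  {A : Type} [Ring A] [Algebra k A] {Y : A} {e : ZMod (p ^ m) → A}

lemma aux_Y_mul (hskew : ∀ i, Y * e i = e (i + 1) * Y)
    (b : Module.Basis (Fin (2 * p ^ n) × ZMod (p ^ m)) k A)
    (hb : ∀ a i, b (a, i) = Y ^ (a : ℕ) * e i) (c : A) :
    ∃ d, Y * c = d * Y := by
  have hc : c ∈ Submodule.span k (Set.range b) := by rw [b.span_eq]; trivial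
  induction hc using Submodule.span_induction with
  | mem u hu =>
    obtain ⟨⟨a, i⟩, rfl⟩ := hu
    refine ⟨Y ^ (a : ℕ) * e (i + 1), ?_⟩
    rw [hb, ← mul_assoc, ← pow_succ', pow_succ, mul_assoc, hskew, ← mul_assoc]
  | zero => exact ⟨0, by simp⟩
  | add u v _ _ hu hv =>
    obtain ⟨d₁, h₁⟩ := hu; obtain ⟨d₂, h₂⟩ := hv
    exact ⟨d₁ + d₂, by rw [mul_add, h₁, h₂, add_mul]⟩
  | smul a u _ hu =>
    obtain ⟨d, h⟩ := hu
    refine ⟨a • d, ?_⟩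
    rw [mul_smul_comm, h, smul_mul_assoc]


lemma aux_nilpotent (hskew : ∀ i, Y * e i = e (i + 1) * Y)
    (hnil : Y ^ (2 * p ^ n) = 0)
    (b : Module.Basis (Fin (2 * p ^ n) × ZMod (p ^ m)) k A)
    (hb : ∀ a i, b (a, i) = Y ^ (a : ℕ) * e i) {z : A}
    (hz : z ∈ Ideal.span {Y}) : z ^ (2 * p ^ n) = 0 := by
  obtain ⟨c, rfl⟩ := Submodule.mem_span_singleton.mp hz
  rw [smul_eq_mul]
  have key : ∀ j : ℕ, ∃ d, (c * Y) ^ j = d * Y ^ j := by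
    intro j
    induction j with
    | zero => exact ⟨1, by simp⟩
    | succ j ih =>
      obtain ⟨d, hd⟩ := ih
      obtain ⟨d', hd'⟩ := aux_Y_mul hskew b hb d
      exact ⟨c * d', by
        rw [pow_succ', hd, ← mul_assoc, mul_assoc c Y d, hd', pow_succ',
          mul_assoc, mul_assoc, mul_assoc]⟩
  obtain ⟨d, hd⟩ := key (2 * p ^ n)
  rw [hd, hnil, mul_zero]


lemma aux_unit (hskew : ∀ i, Y * e i = e (i + 1) * Y)
    (hnil : Y ^ (2 * p ^ n) = 0)
    (b : Module.Basis (Fin (2 * p ^ n) × ZMod (p ^ m)) k A)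
    (hb : ∀ a i, b (a, i) = Y ^ (a : ℕ) * e i) {c₀ : k} (h₀ : c₀ ≠ 0) {z : A}
    (hz : z ∈ Ideal.span {Y}) : IsUnit (algebraMap k A c₀ + z) := by
  refine IsNilpotent.isUnit_add_left_of_commute ⟨2 * p ^ n, aux_nilpotent hskew hnil b hb hz⟩
    (IsUnit.map _ (isUnit_iff_ne_zero.mpr h₀)) ?_
  exact (Algebra.commutes c₀ z).symm


lemma aux_L (he : ∀ i j, e i * e j = if i = j then e i else 0)
    (hskew : ∀ i, Y * e i = e (i + 1) * Y)
    (hnil : Y ^ (2 * p ^ n) = 0)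
    (b : Module.Basis (Fin (2 * p ^ n) × ZMod (p ^ m)) k A)
    (hb : ∀ a i, b (a, i) = Y ^ (a : ℕ) * e i)
    {M : Type} [AddCommGroup M] [Module A M]
    (x : M) (i : ZMod (p ^ m)) (hx : e i • x = x)
    (c : ℕ → k) (T a₀ : ℕ) (haT : a₀ ≤ T) (h₀ : c a₀ ≠ 0)
    (hlow : ∀ a < a₀, c a = 0) :
    (Y ^ a₀ : A) • x ∈ Submodule.span A
      {∑ a ∈ Finset.range (T + 1), (algebraMap k A (c a)) • ((Y ^ a : A) • x)} := by
  classical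
  set y : M := ∑ a ∈ Finset.range (T + 1), (algebraMap k A (c a)) • ((Y ^ a : A) • x) with hy
  have hcond : ∀ a : ℕ, (i + (a₀ : ZMod (p ^ m)) - (a : ZMod (p ^ m)) = i)
      ↔ ((a : ZMod (p ^ m)) = (a₀ : ZMod (p ^ m))) := by
    intro a; rw [sub_eq_iff_eq_add, add_right_inj, eq_comm]
  have hex : ∀ a : ℕ, (e (i + (a₀ : ZMod (p ^ m)) - (a : ZMod (p ^ m))) : A) • x
      = if ((a : ZMod (p ^ m)) = (a₀ : ZMod (p ^ m))) then x else 0 := by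
    intro a
    nth_rewrite 1 [← hx]
    rw [← mul_smul, he]
    split_ifs with h1 h2 h2
    · rw [h1]; exact hx
    · exact absurd ((hcond a).mp h1) h2
    · exact absurd ((hcond a).mpr h2) h1
    · exact zero_smul A x
  have hterm : ∀ a : ℕ, (e (i + (a₀ : ZMod (p ^ m))) : A) • ((Y ^ a : A) • x)
      = if ((a : ZMod (p ^ m)) = (a₀ : ZMod (p ^ m))) then (Y ^ a : A) • x else 0 := by
    intro a
    rw [← mul_smul, aux_eYpow hskew, mul_smul, hex a]
    split_ifs
    · rfl
    · rw [smul_zero]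
  set Q : ℕ → Prop := fun a => ((a : ZMod (p ^ m)) = (a₀ : ZMod (p ^ m))) with hQ
  have hproj : (e (i + (a₀ : ZMod (p ^ m))) : A) • y
      = ∑ a ∈ (Finset.range (T + 1)).filter Q,
          algebraMap k A (c a) • ((Y ^ a : A) • x) := by
    rw [hy, Finset.smul_sum, Finset.sum_filter]
    refine Finset.sum_congr rfl fun a _ => ?_
    rw [← mul_smul, (Algebra.commutes (c a) (e (i + (a₀ : ZMod (p ^ m))))).symm, mul_smul,
      hterm a]
    split_ifs
    · rfl
    · rw [smul_zero]
  set u : A := ∑ a ∈ (Finset.range (T + 1)).filter Q,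
      algebraMap k A (c a) * Y ^ (a - a₀) with hu
  have hu_eq : u • ((Y ^ a₀ : A) • x) = (e (i + (a₀ : ZMod (p ^ m))) : A) • y := by
    rw [hproj, hu, Finset.sum_smul]
    refine Finset.sum_congr rfl fun a ha => ?_
    rcases le_or_gt a₀ a with hle | hlt
    · have hYY : (Y ^ (a - a₀) : A) • ((Y ^ a₀ : A) • x) = (Y ^ a : A) • x := by
        rw [← mul_smul, ← pow_add, Nat.sub_add_cancel hle]
      rw [mul_smul, hYY]
    · rw [hlow a hlt, map_zero, zero_mul, zero_smul, zero_smul]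
  have ha₀mem : a₀ ∈ (Finset.range (T + 1)).filter Q :=
    Finset.mem_filter.mpr ⟨Finset.mem_range.mpr (Nat.lt_succ_of_le haT), rfl⟩
  have hsplit : u = algebraMap k A (c a₀)
      + ∑ a ∈ ((Finset.range (T + 1)).filter Q).erase a₀,
          algebraMap k A (c a) * Y ^ (a - a₀) := by
    rw [hu, ← Finset.add_sum_erase _ _ ha₀mem, Nat.sub_self, pow_zero, mul_one]
  have hzmem : (∑ a ∈ ((Finset.range (T + 1)).filter Q).erase a₀,
      algebraMap k A (c a) * Y ^ (a - a₀)) ∈ Ideal.span {Y} := by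
    refine Submodule.sum_mem _ fun a ha => ?_
    have hane : a ≠ a₀ := Finset.ne_of_mem_erase ha
    rcases lt_or_gt_of_ne hane with hlt | hgt
    · rw [hlow a hlt, map_zero, zero_mul]; exact Submodule.zero_mem _
    · have h1 : a - a₀ = (a - a₀ - 1) + 1 := by omega
      rw [h1, pow_succ, ← mul_assoc]
      exact Ideal.mul_mem_left _ _ (Ideal.subset_span (Set.mem_singleton Y))
  have hunit : IsUnit u := by
    rw [hsplit]; exact aux_unit hskew hnil b hb h₀ hzmem
  obtain ⟨w, hw⟩ := hunit
  have hfin : (Y ^ a₀ : A) • x = (↑w⁻¹ : A) • ((e (i + (a₀ : ZMod (p ^ m))) : A) • y) := by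
    rw [← hu_eq, ← mul_smul, ← hw, Units.inv_mul, one_smul]
  rw [hfin]
  exact Submodule.smul_mem _ _ (Submodule.smul_mem _ _ (Submodule.mem_span_singleton_self y))


lemma aux_single_mul (i j : ZMod (p ^ m)) :
    (Pi.single i (1 : k) : ZMod (p ^ m) → k) * (Pi.single j 1 : ZMod (p ^ m) → k)
      = if i = j then (Pi.single j 1 : ZMod (p ^ m) → k) else 0 := by
  classical
  ext l
  by_cases h : i = j
  · subst h
    simp only [if_pos rfl, Pi.mul_apply, Pi.single_apply]
    split_ifs <;> simp_all [Pi.single_apply]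
  · simp only [if_neg h, Pi.mul_apply, Pi.single_apply, Pi.zero_apply]
    split_ifs <;> simp_all [Pi.single_apply]


lemma aux_phi (he : ∀ i j, e i * e j = if i = j then e i else 0)
    (hsum : ∑ i, e i = 1)
    (hskew : ∀ i, Y * e i = e (i + 1) * Y)
    (hnil : Y ^ (2 * p ^ n) = 0)
    (b : Module.Basis (Fin (2 * p ^ n) × ZMod (p ^ m)) k A)
    (hb : ∀ a i, b (a, i) = Y ^ (a : ℕ) * e i)
    (hdim : 2 ≤ 2 * p ^ n) :
    ∃ φ : A →ₐ[k] (ZMod (p ^ m) → k), Function.Surjective φ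
      ∧ RingHom.ker φ = Ideal.span {Y} := by
  classical
  set i0 : Fin (2 * p ^ n) := ⟨0, by omega⟩ with hi0
  set i1 : Fin (2 * p ^ n) := ⟨1, by omega⟩ with hi1
  have hb0 : ∀ i, b (i0, i) = e i := by
    intro i; rw [hb]; show Y ^ (0 : ℕ) * e i = e i; rw [pow_zero, one_mul]
  have hb1 : ∀ i, b (i1, i) = Y * e i := by
    intro i; rw [hb]; show Y ^ (1 : ℕ) * e i = Y * e i; rw [pow_one]
  set g : (Fin (2 * p ^ n) × ZMod (p ^ m)) → (ZMod (p ^ m) → k) :=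
    fun q => if (q.1 : ℕ) = 0 then Pi.single q.2 1 else 0 with hg
  set φL : A →ₗ[k] (ZMod (p ^ m) → k) := Module.Basis.constr b k g with hφL
  have hφb : ∀ q, φL (b q) = g q := fun q => Module.Basis.constr_basis b k g q
  have hprod : ∀ (a c : Fin (2 * p ^ n)) (i j : ZMod (p ^ m)),
      b (a, i) * b (c, j)
        = if i - ((c : ℕ) : ZMod (p ^ m)) = j
            then Y ^ ((a : ℕ) + (c : ℕ)) * e j else 0 := by
    intro a c i j
    rw [hb, hb, mul_assoc, ← mul_assoc (e i), aux_eYpow hskew, mul_assoc, he, ← mul_assoc,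
      ← pow_add]
    split_ifs with h
    · rw [h]
    · rw [mul_zero]
  have hφhigh : ∀ (t : ℕ) (j : ZMod (p ^ m)), 1 ≤ t → φL (Y ^ t * e j) = 0 := by
    intro t j ht
    by_cases hlt : t < 2 * p ^ n
    · have h1 : Y ^ t * e j = b (⟨t, hlt⟩, j) := (hb ⟨t, hlt⟩ j).symm
      rw [h1, hφb]
      have h2 : ¬ ((⟨t, hlt⟩ : Fin (2 * p ^ n)) : ℕ) = 0 := by
        simpa using Nat.one_le_iff_ne_zero.mp ht
      simp [hg, h2]
    · have ht2 : t = 2 * p ^ n + (t - 2 * p ^ n) := by omega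
      rw [ht2, pow_add, hnil, zero_mul, zero_mul, map_zero]
  have hmul : ∀ x y : A, φL (x * y) = φL x * φL y := by
    have hBB : ((LinearMap.mul k A).compr₂ φL)
        = (LinearMap.mul k (ZMod (p ^ m) → k)).compl₁₂ φL φL := by
      refine LinearMap.ext_basis b b fun q q' => ?_
      obtain ⟨a, i⟩ := q; obtain ⟨c, j⟩ := q'
      simp only [LinearMap.compr₂_apply, LinearMap.compl₁₂_apply, LinearMap.mul_apply']
      rw [hprod, hφb, hφb]
      by_cases hac : (a : ℕ) = 0 ∧ (c : ℕ) = 0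
      · obtain ⟨ha, hc⟩ := hac
        have hc0 : ((c : ℕ) : ZMod (p ^ m)) = 0 := by rw [hc]; exact Nat.cast_zero
        have hga : g (a, i) = Pi.single i 1 := by simp [hg, ha]
        have hgc : g (c, j) = Pi.single j 1 := by simp [hg, hc]
        rw [hga, hgc, aux_single_mul, hc0, sub_zero, ha, hc]
        split_ifs with h
        · have h0 : Y ^ ((0 : ℕ) + 0) * e j = b (i0, j) := by
            rw [hb0 j]; norm_num
          rw [h0, hφb]
          simp [hg, hi0]
        · exact map_zero _
      · have h1 : 1 ≤ (a : ℕ) + (c : ℕ) := by omega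
        have hrhs : g (a, i) * g (c, j) = 0 := by
          rcases not_and_or.mp hac with h | h
          · have : g (a, i) = 0 := by simp [hg, h]
            rw [this, zero_mul]
          · have : g (c, j) = 0 := by simp [hg, h]
            rw [this, mul_zero]
        rw [hrhs]
        split_ifs with h
        · exact hφhigh _ j h1
        · exact map_zero _
    intro x y
    have h2 := LinearMap.congr_fun (LinearMap.congr_fun hBB x) y
    simpa only [LinearMap.compr₂_apply, LinearMap.compl₁₂_apply, LinearMap.mul_apply'] using h2
  have hone : φL 1 = 1 := by
    rw [← hsum, map_sum]
    have h1 : ∀ i, φL (e i) = Pi.single i (1 : k) := by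
      intro i; rw [← hb0 i, hφb]; simp [hg, hi0]
    simp only [h1]
    have h2 := Finset.univ_sum_single (1 : ZMod (p ^ m) → k)
    simpa using h2
  set φ : A →ₐ[k] (ZMod (p ^ m) → k) := AlgHom.ofLinearMap φL hone hmul with hφ
  have hφap : ∀ x, φ x = φL x := fun _ => rfl
  have hcoeff : ∀ (x : A) (j₀ : ZMod (p ^ m)), φL x j₀ = b.repr x (i0, j₀) := by
    intro x j₀
    conv_lhs => rw [← b.sum_repr x]
    rw [map_sum, Finset.sum_apply]
    simp only [map_smul, hφb, Pi.smul_apply, smul_eq_mul]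
    rw [Finset.sum_eq_single (i0, j₀)]
    · simp [hg, hi0, Pi.single_apply]
    · rintro ⟨a, j⟩ _ hq
      by_cases ha : (a : ℕ) = 0
      · have ha' : a = i0 := Fin.ext ha
        have hj : j ≠ j₀ := fun h => hq (by rw [ha', h])
        simp [hg, ha, Pi.single_apply, hj]
      · simp [hg, ha]
    · intro h; exact absurd (Finset.mem_univ _) h
  have hφY : φL Y = 0 := by
    have hY : Y = ∑ i, b (i1, i) := by
      calc Y = Y * 1 := (mul_one Y).symm
      _ = ∑ i, Y * e i := by rw [← hsum, Finset.mul_sum]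
      _ = ∑ i, b (i1, i) := Finset.sum_congr rfl fun i _ => (hb1 i).symm
    rw [hY, map_sum]
    have h1 : ∀ i, φL (b (i1, i)) = 0 := by
      intro i; rw [hφb]
      have : ¬ ((i1 : ℕ) = 0) := by rw [hi1]; simp
      simp [hg, this]
    simp [h1]
  refine ⟨φ, ?_, ?_⟩
  · intro v
    refine ⟨∑ i, v i • b (i0, i), ?_⟩
    rw [map_sum]
    simp only [map_smul, hφap, hφb]
    have h1 : ∀ i : ZMod (p ^ m), v i • g (i0, i) = Pi.single i (v i) := by
      intro i
      have : g (i0, i) = Pi.single i 1 := by simp [hg, hi0]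
      rw [this, ← Pi.single_smul, smul_eq_mul, mul_one]
    simp only [h1]
    exact Finset.univ_sum_single v
  · ext x
    rw [RingHom.mem_ker]
    constructor
    · intro hx
      have hx' : φL x = 0 := by rw [← hφap]; exact hx
      rw [← b.sum_repr x]
      refine Submodule.sum_mem _ fun q _ => ?_
      obtain ⟨a, j⟩ := q
      by_cases ha : (a : ℕ) = 0
      · have ha' : a = i0 := Fin.ext ha
        have : b.repr x (a, j) = 0 := by
          rw [ha', ← hcoeff x j, hx']; rfl
        rw [this, zero_smul]
        exact Submodule.zero_mem _
      · have h2 : (a : ℕ) = ((a : ℕ) - 1) + 1 := by omega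
        have h3 : Y ^ (a : ℕ) * e j = (Y ^ ((a : ℕ) - 1) * e (j + 1)) * Y := by
          conv_lhs => rw [h2]
          rw [pow_succ, mul_assoc, hskew, ← mul_assoc]
        rw [hb, h3, Algebra.smul_def]
        exact Ideal.mul_mem_left _ _
          (Ideal.mul_mem_left _ _ (Ideal.subset_span (Set.mem_singleton Y)))
    · intro hx
      have hsp : Ideal.span {Y} ≤ RingHom.ker φ := by
        rw [Ideal.span_le, Set.singleton_subset_iff]
        rw [SetLike.mem_coe, RingHom.mem_ker]
        rw [hφap]; exact hφY
      exact RingHom.mem_ker.mp (hsp hx)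

lemma aux_repr (hskew : ∀ i, Y * e i = e (i + 1) * Y)
    (hnil : Y ^ (2 * p ^ n) = 0)
    (b : Module.Basis (Fin (2 * p ^ n) × ZMod (p ^ m)) k A)
    (hb : ∀ a i, b (a, i) = Y ^ (a : ℕ) * e i)
    (d : A) (cp : ℕ) (q : Fin (2 * p ^ n) × ZMod (p ^ m)) (hq : (q.1 : ℕ) < cp) :
    b.repr (d * Y ^ cp) q = 0 := by
  classical
  conv_lhs => rw [← b.sum_repr d, Finset.sum_mul]
  have hterm : ∀ q' : Fin (2 * p ^ n) × ZMod (p ^ m),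
      b.repr ((b.repr d q' • b q') * Y ^ cp) q = 0 := by
    rintro ⟨a, j⟩
    rw [smul_mul_assoc]
    have h1 : b (a, j) * Y ^ cp = Y ^ ((a : ℕ) + cp) * e (j - (cp : ZMod (p ^ m))) := by
      rw [hb, mul_assoc, aux_eYpow hskew, ← mul_assoc, ← pow_add]
    rw [h1]
    by_cases hlt : (a : ℕ) + cp < 2 * p ^ n
    · have h2 : b (⟨(a : ℕ) + cp, hlt⟩, j - (cp : ZMod (p ^ m)))
          = Y ^ ((a : ℕ) + cp) * e (j - (cp : ZMod (p ^ m))) := hb _ _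
      rw [← h2, map_smul, Finsupp.smul_apply, b.repr_self_apply]
      have hne : ¬ ((⟨(a : ℕ) + cp, hlt⟩, j - (cp : ZMod (p ^ m)))
          = q) := by
        intro h
        have := congrArg (fun z => (z.1 : ℕ)) h
        simp only at this
        omega
      rw [if_neg hne, smul_zero]
    · have h3 : (a : ℕ) + cp = 2 * p ^ n + ((a : ℕ) + cp - 2 * p ^ n) := by omega
      rw [h3, pow_add, hnil, zero_mul, zero_mul, smul_zero, map_zero]
      rfl
  rw [map_sum, Finsupp.coe_finset_sum, Finset.sum_apply]
  exact Finset.sum_eq_zero fun q' _ => hterm q'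


lemma aux_part3 (he : ∀ i j, e i * e j = if i = j then e i else 0)
    (hskew : ∀ i, Y * e i = e (i + 1) * Y)
    (hnil : Y ^ (2 * p ^ n) = 0)
    (b : Module.Basis (Fin (2 * p ^ n) × ZMod (p ^ m)) k A)
    (hb : ∀ a i, b (a, i) = Y ^ (a : ℕ) * e i)
    (hdim : 2 ≤ 2 * p ^ n) :
    (∀ x ∈ Ideal.span {Y}, ∃ c : ZMod (p ^ m) → k,
      x - ∑ j, c j • (Y * e j) ∈ Ideal.span {Y * Y}) ∧
    (∀ c : ZMod (p ^ m) → k,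
      (∑ j, c j • (Y * e j)) ∈ Ideal.span {Y * Y} → c = 0) := by
  classical
  set i1 : Fin (2 * p ^ n) := ⟨1, by omega⟩ with hi1
  have hb1 : ∀ i, b (i1, i) = Y * e i := by
    intro i; rw [hb]; show Y ^ (1 : ℕ) * e i = Y * e i; rw [pow_one]
  have hYY : Y * Y = Y ^ 2 := (sq Y).symm
  -- repr of the correction sum
  have hrepr_sum : ∀ (c : ZMod (p ^ m) → k) (q : Fin (2 * p ^ n) × ZMod (p ^ m)),
      b.repr (∑ j, c j • (Y * e j)) q = if q.1 = i1 then c q.2 else 0 := by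
    intro c q
    obtain ⟨q1, q2⟩ := q
    have h0 : ∀ j, c j • (Y * e j) = c j • b (i1, j) := by intro j; rw [hb1]
    simp only [h0]
    rw [map_sum, Finsupp.coe_finset_sum, Finset.sum_apply]
    simp only [map_smul, Finsupp.smul_apply, b.repr_self_apply]
    by_cases hq : q1 = i1
    · subst hq
      rw [if_pos rfl]
      rw [Finset.sum_eq_single q2]
      · rw [if_pos rfl, smul_eq_mul, mul_one]
      · intro j _ hj
        rw [if_neg, smul_zero]
        intro h
        exact hj (congrArg Prod.snd h)
      · intro h; exact absurd (Finset.mem_univ _) h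
    · rw [if_neg hq]
      refine Finset.sum_eq_zero fun j _ => ?_
      rw [if_neg, smul_zero]
      intro h
      exact hq (congrArg Prod.fst h).symm
  -- membership of high basis vectors
  have hmem2 : ∀ (q : Fin (2 * p ^ n) × ZMod (p ^ m)), 2 ≤ (q.1 : ℕ) →
      (b q : A) ∈ Ideal.span {Y * Y} := by
    rintro ⟨a, j⟩ ha
    have ha' : 2 ≤ (a : ℕ) := ha
    have h2 : (a : ℕ) = ((a : ℕ) - 2) + 2 := by omega
    have h3 : Y ^ (a : ℕ) * e j
        = (Y ^ ((a : ℕ) - 2) * e (j + ((2 : ℕ) : ZMod (p ^ m)))) * (Y * Y) := by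
      conv_lhs => rw [h2]
      rw [pow_add, mul_assoc, aux_Ypow_e hskew, ← mul_assoc, hYY]
    rw [hb, h3]
    exact Ideal.mul_mem_left _ _ (Ideal.subset_span (Set.mem_singleton _))
  constructor
  · intro x hx
    obtain ⟨d, hd⟩ := Submodule.mem_span_singleton.mp hx
    rw [smul_eq_mul] at hd
    refine ⟨fun j => b.repr x (i1, j), ?_⟩
    set z : A := x - ∑ j, b.repr x (i1, j) • (Y * e j) with hz
    have hzq : ∀ q : Fin (2 * p ^ n) × ZMod (p ^ m), (q.1 : ℕ) < 2 → b.repr z q = 0 := by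
      intro q hq2
      rw [hz, map_sub, Finsupp.sub_apply, hrepr_sum]
      by_cases h1 : q.1 = i1
      · rw [if_pos h1]
        have hqe : q = (i1, q.2) := by rw [← h1]
        nth_rewrite 1 [hqe]
        exact sub_self _
      · rw [if_neg h1]
        have h0 : (q.1 : ℕ) = 0 := by
          have : (q.1 : ℕ) ≠ 1 := by
            intro h; exact h1 (Fin.ext h)
          omega
        have hx0 : b.repr x q = 0 := by
          rw [← hd]
          rw [← pow_one Y]
          exact aux_repr hskew hnil b hb d 1 q (by omega)
        rw [hx0, sub_zero]
    rw [← b.sum_repr z]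
    refine Submodule.sum_mem _ fun q _ => ?_
    by_cases hq2 : (q.1 : ℕ) < 2
    · rw [hzq q hq2, zero_smul]; exact Submodule.zero_mem _
    · rw [Algebra.smul_def]
      exact Ideal.mul_mem_left _ _ (hmem2 q (by omega))
  · intro c hc
    obtain ⟨d, hd⟩ := Submodule.mem_span_singleton.mp hc
    rw [smul_eq_mul] at hd
    funext j
    have h1 : b.repr (∑ j, c j • (Y * e j)) (i1, j) = c j := by
      rw [hrepr_sum, if_pos rfl]
    have h2 : b.repr (∑ j, c j • (Y * e j)) (i1, j) = 0 := by
      rw [← hd, hYY]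
      exact aux_repr hskew hnil b hb d 2 (i1, j) one_lt_two
    rw [h1] at h2
    simpa using h2

lemma aux_jac (hskew : ∀ i, Y * e i = e (i + 1) * Y)
    (hnil : Y ^ (2 * p ^ n) = 0)
    (b : Module.Basis (Fin (2 * p ^ n) × ZMod (p ^ m)) k A)
    (hb : ∀ a i, b (a, i) = Y ^ (a : ℕ) * e i)
    (φ : A →ₐ[k] (ZMod (p ^ m) → k))
    (hker : RingHom.ker φ = Ideal.span {Y}) :
    (⊥ : Ideal A).jacobson = Ideal.span {Y} := by
  classical
  apply le_antisymm
  · -- jacobson ≤ span {Y}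
    set ψ : ZMod (p ^ m) → (A →+* k) :=
      fun i₀ => (Pi.evalRingHom (fun _ : ZMod (p ^ m) => k) i₀).comp (φ : A →+* (ZMod (p ^ m) → k))
        with hψ
    have hψap : ∀ i₀ x, ψ i₀ x = φ x i₀ := fun _ _ => rfl
    have hψalg : ∀ (i₀ : ZMod (p ^ m)) (c : k), ψ i₀ (algebraMap k A c) = c := by
      intro i₀ c
      rw [hψap, AlgHom.commutes]
      rfl
    have hmax : ∀ i₀ : ZMod (p ^ m), (RingHom.ker (ψ i₀)).IsMaximal := by
      intro i₀
      rw [Ideal.isMaximal_iff]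
      constructor
      · intro h1
        have := RingHom.mem_ker.mp h1
        rw [map_one] at this
        exact one_ne_zero this
      · intro J x hle hxk hxJ
        have hx0 : ψ i₀ x ≠ 0 := fun h => hxk (RingHom.mem_ker.mpr h)
        have h1 : algebraMap k A (ψ i₀ x)⁻¹ * x ∈ J := Ideal.mul_mem_left _ _ hxJ
        have h2 : 1 - algebraMap k A (ψ i₀ x)⁻¹ * x ∈ RingHom.ker (ψ i₀) := by
          rw [RingHom.mem_ker, map_sub, map_one, map_mul, hψalg, inv_mul_cancel₀ hx0, sub_self]
        have h3 := J.add_mem (hle h2) h1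
        rwa [sub_add_cancel] at h3
    intro x hx
    have hxk : ∀ i₀, x ∈ RingHom.ker (ψ i₀) := by
      intro i₀
      have hle : (⊥ : Ideal A).jacobson ≤ RingHom.ker (ψ i₀) := by
        rw [Ideal.jacobson]
        exact sInf_le ⟨bot_le, hmax i₀⟩
      exact hle hx
    rw [← hker, RingHom.mem_ker]
    funext i₀
    exact RingHom.mem_ker.mp (hxk i₀)
  · -- span {Y} ≤ jacobson
    rw [Ideal.jacobson]
    refine le_sInf fun J hJ => ?_
    obtain ⟨-, hJm⟩ := hJ
    rw [Ideal.span_le, Set.singleton_subset_iff]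
    by_contra hY
    have hlt : J < J ⊔ Ideal.span {Y} := by
      refine lt_of_le_of_ne le_sup_left fun h => hY ?_
      have : Ideal.span {Y} ≤ J := by
        rw [h]
        exact le_sup_right
      exact this (Ideal.subset_span (Set.mem_singleton Y))
    have htop : J ⊔ Ideal.span {Y} = ⊤ := hJm.1.2 _ hlt
    have h1 : (1 : A) ∈ J ⊔ Ideal.span {Y} := by rw [htop]; trivial
    obtain ⟨a, haJ, z, hz, hsum1⟩ := Submodule.mem_sup.mp h1
    have ha : a = algebraMap k A 1 + (-z) := by
      rw [map_one]
      have h2 : a = 1 - z := by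
        rw [← hsum1]; abel
      rw [h2, sub_eq_add_neg]
    have hunit : IsUnit a := by
      rw [ha]
      exact aux_unit hskew hnil b hb one_ne_zero (Submodule.neg_mem _ hz)
    exact hJm.ne_top (Ideal.eq_top_of_isUnit_mem _ haJ hunit)

lemma aux_nak (he : ∀ i j, e i * e j = if i = j then e i else 0)
    (hsum : ∑ i, e i = 1)
    (hskew : ∀ i, Y * e i = e (i + 1) * Y)
    (hnil : Y ^ (2 * p ^ n) = 0)
    (b : Module.Basis (Fin (2 * p ^ n) × ZMod (p ^ m)) k A)
    (hb : ∀ a i, b (a, i) = Y ^ (a : ℕ) * e i)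
    (M : Type) [AddCommGroup M] [Module A M]
    (hMnt : Nontrivial M)
    (hcompl : ∀ N₁ N₂ : Submodule A M, IsCompl N₁ N₂ → N₁ = ⊥ ∨ N₂ = ⊥) :
    ∀ N₁ N₂ : Submodule A M, N₁ ≤ N₂ ∨ N₂ ≤ N₁ := by
  classical
  letI instkM : Module k M := Module.compHom M (algebraMap k A)
  have hsmulk : ∀ (c : k) (mm : M), c • mm = (algebraMap k A c) • mm := fun _ _ => rfl
  haveI : IsScalarTower k A M := ⟨fun c a mm => by
    rw [Algebra.smul_def, mul_smul]
    exact (hsmulk c (a • mm)).symm⟩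
  have hkmul : ∀ (c d : k) (v : M), (c * d) • v = c • (d • v) := by
    intro c d v
    rw [hsmulk, map_mul, mul_smul, ← hsmulk, ← hsmulk]
  -- Loewy length
  have hPex : ∃ j : ℕ, ∀ mm : M, (Y ^ j : A) • mm = 0 := by
    exact ⟨2 * p ^ n, fun mm => by rw [hnil, zero_smul]⟩
  set T : ℕ := Nat.find hPex with hTdef
  have hTall : ∀ mm : M, (Y ^ T : A) • mm = 0 := Nat.find_spec hPex
  have hT1 : 1 ≤ T := by
    rcases Nat.eq_zero_or_pos T with h0 | h
    · exfalso
      obtain ⟨mm1, mm2, hne⟩ := hMnt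
      have h1 := hTall mm1
      have h2 := hTall mm2
      rw [h0, pow_zero, one_smul] at h1 h2
      exact hne (h1.trans h2.symm)
    · exact h
  set t : ℕ := T - 1 with htdef
  have htT : t + 1 = T := by omega
  have ht1 : ∀ mm : M, (Y ^ (t + 1) : A) • mm = 0 := by rw [htT]; exact hTall
  have hbig : ∀ a : ℕ, t < a → ∀ mm : M, (Y ^ a : A) • mm = 0 := by
    intro a ha mm
    have h1 : a = (a - (t + 1)) + (t + 1) := by omega
    rw [h1, pow_add, mul_smul, ht1, smul_zero]
  have htne : ∃ mm : M, (Y ^ t : A) • mm ≠ 0 := by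
    by_contra hcon
    push_neg at hcon
    exact Nat.find_min hPex (by omega : t < T) hcon
  obtain ⟨m₀, hm₀⟩ := htne
  have hex_i : ∃ i, (Y ^ t : A) • ((e i : A) • m₀) ≠ 0 := by
    by_contra hcon
    push_neg at hcon
    apply hm₀
    have hsum_smul : ∑ i, (e i : A) • m₀ = m₀ := by
      rw [← Finset.sum_smul, hsum, one_smul]
    calc (Y ^ t : A) • m₀ = (Y ^ t : A) • ∑ i, (e i : A) • m₀ := by rw [hsum_smul]
    _ = ∑ i, (Y ^ t : A) • ((e i : A) • m₀) := Finset.smul_sum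
    _ = 0 := Finset.sum_eq_zero fun i _ => hcon i
  obtain ⟨i, hi⟩ := hex_i
  set x : M := (e i : A) • m₀ with hxdef
  have hex : (e i : A) • x = x := by rw [hxdef, ← mul_smul, he, if_pos rfl]
  have hxt : (Y ^ t : A) • x ≠ 0 := hi
  have hx0 : x ≠ 0 := fun h => hxt (by rw [h, smul_zero])
  clear_value T t x
  -- projection formula
  have hprj : ∀ (j : ZMod (p ^ m)) (a : ℕ), (e j : A) • ((Y ^ a : A) • x)
      = if j = i + (a : ZMod (p ^ m)) then (Y ^ a : A) • x else 0 := by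
    intro j a
    have h1 : (e (j - (a : ZMod (p ^ m))) : A) • x
        = if j = i + (a : ZMod (p ^ m)) then x else 0 := by
      nth_rewrite 1 [← hex]
      rw [← mul_smul, he]
      split_ifs with hc1 hc2 hc2
      · rw [hc1]; exact hex
      · exact absurd (sub_eq_iff_eq_add.mp hc1) hc2
      · exact absurd (sub_eq_iff_eq_add.mpr hc2) hc1
      · exact zero_smul A x
    rw [← mul_smul, aux_eYpow hskew, mul_smul, h1]
    split_ifs
    · rfl
    · rw [smul_zero]
  -- linear independence of Y^a • x, 0 ≤ a ≤ t
  set g : Fin (t + 1) → M := fun a => (Y ^ (a : ℕ) : A) • x with hgdef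
  have hli : LinearIndependent k g := by
    rw [Fintype.linearIndependent_iff]
    intro cf hcf
    by_contra hcon
    push_neg at hcon
    obtain ⟨a₁, ha₁⟩ := hcon
    set c' : ℕ → k := fun a => if h : a < t + 1 then cf ⟨a, h⟩ else 0 with hc'
    have hca₁ : c' (a₁ : ℕ) = cf a₁ := by simp only [hc']; rw [dif_pos a₁.isLt]
    have hex' : ∃ a, c' a ≠ 0 := ⟨(a₁ : ℕ), by rw [hca₁]; exact ha₁⟩
    set a₀ := Nat.find hex' with ha₀def
    have h₀ : c' a₀ ≠ 0 := Nat.find_spec hex'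
    have hlow : ∀ a < a₀, c' a = 0 := fun a ha => not_not.mp (Nat.find_min hex' ha)
    have ha₀t : a₀ ≤ t := by
      by_contra hgt
      push_neg at hgt
      apply h₀
      simp only [hc']
      rw [dif_neg (by omega)]
    have hsum0 : ∑ a ∈ Finset.range (t + 1),
        (algebraMap k A (c' a)) • ((Y ^ a : A) • x) = 0 := by
      rw [← hcf,
        ← Fin.sum_univ_eq_sum_range (fun a => (algebraMap k A (c' a)) • ((Y ^ a : A) • x)) (t + 1)]
      refine Finset.sum_congr rfl fun a _ => ?_
      have h1 : c' (a : ℕ) = cf a := by simp only [hc']; rw [dif_pos a.isLt]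
      rw [h1, ← hsmulk]
    have hkey := aux_L he hskew hnil b hb x i hex c' t a₀ ha₀t h₀ hlow
    rw [hsum0, Submodule.span_zero_singleton] at hkey
    have h5 : (Y ^ a₀ : A) • x = 0 := by simpa using hkey
    apply hxt
    have h6 : (Y ^ t : A) • x = (Y ^ (t - a₀) : A) • ((Y ^ a₀ : A) • x) := by
      have h7 : (t - a₀) + a₀ = t := by omega
      rw [← mul_smul, ← pow_add, h7]
    rw [h6, h5, smul_zero]
  have hli_set : LinearIndepOn k id (Set.range g) := hli.linearIndepOn_id
  set B := Module.Basis.extend hli_set with hBdef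
  have hgmem : ∀ a : Fin (t + 1), g a ∈ hli_set.extend (Set.subset_univ _) :=
    fun a => hli_set.subset_extend _ ⟨a, rfl⟩
  set f₀ : M →ₗ[k] k := B.coord ⟨g ⟨t, by omega⟩, hgmem _⟩ with hf₀def
  have hf₀ : ∀ a : Fin (t + 1), f₀ (g a) = if (a : ℕ) = t then 1 else 0 := by
    intro a
    rw [show g a = B ⟨g a, hgmem a⟩ from (Module.Basis.extend_apply_self hli_set ⟨g a, hgmem a⟩).symm]
    rw [hf₀def, Module.Basis.coord_apply, B.repr_self_apply]
    by_cases h : (a : ℕ) = t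
    · rw [if_pos h, if_pos]
      have h2 : a = ⟨t, by omega⟩ := Fin.ext h
      exact Subtype.ext (by rw [h2])
    · rw [if_neg h, if_neg]
      intro hcontra
      have h3 : g a = g ⟨t, by omega⟩ := congrArg Subtype.val hcontra
      have h4 := hli.injective h3
      exact h (by rw [h4])
  set elM : M →ₗ[k] M :=
    { toFun := fun mm => (e (i + (t : ZMod (p ^ m))) : A) • mm
      map_add' := fun _ _ => smul_add _ _ _
      map_smul' := fun c mm => by
        simp only [RingHom.id_apply]
        rw [hsmulk, ← mul_smul, ← Algebra.commutes, mul_smul, ← hsmulk] } with helM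
  set f : M →ₗ[k] k := f₀.comp elM with hfdef
  have hfshow : ∀ v : M, f v = f₀ ((e (i + (t : ZMod (p ^ m))) : A) • v) := fun v => rfl
  have hfval : ∀ a : ℕ, f ((Y ^ a : A) • x) = if a = t then 1 else 0 := by
    intro a
    rw [hfshow, hprj]
    by_cases hc : (i + (t : ZMod (p ^ m))) = i + (a : ZMod (p ^ m))
    · rw [if_pos hc]
      by_cases hat : a ≤ t
      · have h1 : (Y ^ a : A) • x = g ⟨a, by omega⟩ := rfl
        rw [h1, hf₀]
      · rw [hbig a (by omega), map_zero, if_neg (by omega)]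
    · rw [if_neg hc, map_zero, if_neg]
      intro h
      exact hc (by rw [h])
  -- the projector r
  set r : M → M := fun mm =>
    ∑ a ∈ Finset.range (t + 1), f ((Y ^ (t - a) : A) • mm) • ((Y ^ a : A) • x) with hrdef
  have hr_mem : ∀ mm, r mm ∈ Submodule.span A {x} := by
    intro mm
    refine Submodule.sum_mem _ fun a _ => ?_
    rw [hsmulk]
    exact Submodule.smul_mem _ _ (Submodule.smul_mem _ _ (Submodule.mem_span_singleton_self x))
  have hr_add : ∀ m1 m2, r (m1 + m2) = r m1 + r m2 := by
    intro m1 m2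
    rw [hrdef]
    simp only []
    rw [← Finset.sum_add_distrib]
    refine Finset.sum_congr rfl fun a _ => ?_
    rw [smul_add, map_add, add_smul]
  have hr0 : r (0 : M) = 0 := by
    refine Finset.sum_eq_zero fun a _ => ?_
    rw [smul_zero, map_zero, zero_smul]
  have hr_neg : ∀ mm, r (-mm) = - r mm := by
    intro mm
    have h1 : r (-mm) + r mm = 0 := by rw [← hr_add, neg_add_cancel, hr0]
    have := eq_neg_of_add_eq_zero_left h1
    exact this
  have hr_sub : ∀ m1 m2, r (m1 - m2) = r m1 - r m2 := by
    intro m1 m2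
    rw [sub_eq_add_neg, hr_add, hr_neg, ← sub_eq_add_neg]
  have hr_ksmul : ∀ (c : k) (mm : M), r (c • mm) = c • r mm := by
    intro c mm
    rw [Finset.smul_sum]
    refine Finset.sum_congr rfl fun a _ => ?_
    have h1 : (Y ^ (t - a) : A) • (c • mm) = c • ((Y ^ (t - a) : A) • mm) := by
      rw [hsmulk, ← mul_smul, ← Algebra.commutes, mul_smul, ← hsmulk]
    rw [h1, map_smul, smul_eq_mul, hkmul]
  have hr_e : ∀ (j : ZMod (p ^ m)) (mm : M), r ((e j : A) • mm) = (e j : A) • r mm := by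
    intro j mm
    rw [Finset.smul_sum]
    refine Finset.sum_congr rfl fun a ha => ?_
    have hat : a ≤ t := by
      have := Finset.mem_range.mp ha
      omega
    have hrhs : (e j : A) • (f ((Y ^ (t - a) : A) • mm) • ((Y ^ a : A) • x))
        = f ((Y ^ (t - a) : A) • mm) • ((e j : A) • ((Y ^ a : A) • x)) := by
      rw [hsmulk, ← mul_smul, ← Algebra.commutes, mul_smul, ← hsmulk]
    have hcast : ((t - a : ℕ) : ZMod (p ^ m)) = (t : ZMod (p ^ m)) - (a : ZMod (p ^ m)) :=
      Nat.cast_sub hat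
    have hidx : i + (t : ZMod (p ^ m)) - ((t - a : ℕ) : ZMod (p ^ m)) = i + (a : ZMod (p ^ m)) := by
      rw [hcast]; ring
    have hmid : ∀ w : M, (e (i + (t : ZMod (p ^ m))) : A) • ((Y ^ (t - a) : A) • w)
        = (Y ^ (t - a) : A) • ((e (i + (a : ZMod (p ^ m))) : A) • w) := by
      intro w
      rw [← mul_smul, aux_eYpow hskew, hidx, mul_smul]
    have hlhs : f ((Y ^ (t - a) : A) • ((e j : A) • mm))
        = if i + (a : ZMod (p ^ m)) = j then f ((Y ^ (t - a) : A) • mm) else 0 := by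
      rw [hfshow, hmid, ← mul_smul (e (i + (a : ZMod (p ^ m)))) (e j) mm, he]
      by_cases hc : i + (a : ZMod (p ^ m)) = j
      · rw [if_pos hc, if_pos hc, hfshow, hmid]
      · rw [if_neg hc, if_neg hc, zero_smul, smul_zero, map_zero]
    rw [hrhs, hprj, hlhs]
    by_cases hc : i + (a : ZMod (p ^ m)) = j
    · rw [if_pos hc, if_pos hc.symm]
    · rw [if_neg hc, if_neg (fun h => hc h.symm), zero_smul, smul_zero]
  have hr_Y : ∀ mm : M, r ((Y : A) • mm) = (Y : A) • r mm := by
    intro mm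
    set G : ℕ → M := fun a => f ((Y ^ (t + 1 - a) : A) • mm) • ((Y ^ a : A) • x) with hG
    have hLHS : r ((Y : A) • mm) = ∑ a ∈ Finset.range (t + 1), G a := by
      refine Finset.sum_congr rfl fun a ha => ?_
      have hat : a ≤ t := by
        have := Finset.mem_range.mp ha
        omega
      have h1 : (Y ^ (t - a) : A) • ((Y : A) • mm) = (Y ^ (t + 1 - a) : A) • mm := by
        rw [← mul_smul, ← pow_succ, show t - a + 1 = t + 1 - a from by omega]
      rw [h1, hG]
    have hRHS : (Y : A) • r mm = ∑ a ∈ Finset.range (t + 1), G (a + 1) := by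
      rw [Finset.smul_sum]
      refine Finset.sum_congr rfl fun a ha => ?_
      have h1 : (Y : A) • (f ((Y ^ (t - a) : A) • mm) • ((Y ^ a : A) • x))
          = f ((Y ^ (t - a) : A) • mm) • ((Y ^ (a + 1) : A) • x) := by
        rw [hsmulk, hsmulk, ← mul_smul, ← Algebra.commutes, mul_smul, ← mul_smul Y, ← pow_succ']
      rw [h1, hG]
      simp only []
      rw [show t + 1 - (a + 1) = t - a from by omega]
    have hG0 : G 0 = 0 := by
      rw [hG]
      simp only []
      rw [Nat.sub_zero, ht1 mm, map_zero, zero_smul]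
    have hGt1 : G (t + 1) = 0 := by
      rw [hG]
      simp only []
      rw [ht1 x, smul_zero]
    have e1 : ∑ a ∈ Finset.range (t + 2), G a
        = ∑ a ∈ Finset.range (t + 1), G a + G (t + 1) := Finset.sum_range_succ G (t + 1)
    have e2 : ∑ a ∈ Finset.range (t + 2), G a
        = (∑ a ∈ Finset.range (t + 1), G (a + 1)) + G 0 := Finset.sum_range_succ' G (t + 1)
    rw [hGt1, add_zero] at e1
    rw [hG0, add_zero] at e2
    rw [hLHS, hRHS, ← e1, e2]
  have hrA : ∀ (u : A) (mm : M), r (u • mm) = u • r mm := by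
    intro u mm
    have hu : u ∈ Submodule.span k (Set.range b) := by rw [b.span_eq]; trivial
    induction hu using Submodule.span_induction with
    | mem v hv =>
      obtain ⟨⟨a, j⟩, rfl⟩ := hv
      rw [hb, mul_smul, mul_smul]
      have hpow : ∀ (a' : ℕ) (w : M), r ((Y ^ a' : A) • w) = (Y ^ a' : A) • r w := by
        intro a'
        induction a' with
        | zero => intro w; rw [pow_zero, one_smul, one_smul]
        | succ a' ih =>
          intro w
          rw [pow_succ', mul_smul, hr_Y, ih, ← mul_smul, ← pow_succ']
      rw [hpow, hr_e]
    | zero => rw [zero_smul, zero_smul, hr0]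
    | add u v _ _ hu hv => rw [add_smul, add_smul, hr_add, hu, hv]
    | smul c v _ hv => rw [smul_assoc, hr_ksmul, hv, ← smul_assoc]
  have hrx : r x = x := by
    rw [hrdef]
    simp only []
    rw [Finset.sum_eq_single 0]
    · rw [Nat.sub_zero, hfval t, if_pos rfl, pow_zero, one_smul, one_smul]
    · intro a ha hane
      have hat : a ≤ t := by
        have := Finset.mem_range.mp ha
        omega
      rw [hfval (t - a), if_neg (by omega), zero_smul]
    · intro h
      exact absurd (Finset.mem_range.mpr (by omega)) h
  have hrid : ∀ z ∈ Submodule.span A {x}, r z = z := by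
    intro z hzz
    obtain ⟨u, rfl⟩ := Submodule.mem_span_singleton.mp hzz
    rw [hrA, hrx]
  set X : Submodule A M := Submodule.span A {x} with hX
  set K : Submodule A M :=
    { carrier := {mm | r mm = 0}
      add_mem' := by
        intro m1 m2 h1 h2
        show r (m1 + m2) = 0
        rw [hr_add, h1, h2, add_zero]
      zero_mem' := hr0
      smul_mem' := by
        intro u mm h
        show r (u • mm) = 0
        rw [hrA, h, smul_zero] } with hK
  have hKmem : ∀ mm : M, mm ∈ K ↔ r mm = 0 := fun _ => Iff.rfl
  have hXK : IsCompl X K := by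
    constructor
    · rw [Submodule.disjoint_def]
      intro mm hmX hmK
      rw [← hrid mm hmX]
      exact (hKmem mm).mp hmK
    · rw [codisjoint_iff, Submodule.eq_top_iff']
      intro mm
      have h1 : r mm ∈ X := hr_mem mm
      have h2 : mm - r mm ∈ K := by
        rw [hKmem, hr_sub, hrid (r mm) h1, sub_self]
      have h3 : r mm + (mm - r mm) = mm := by abel
      exact Submodule.mem_sup.mpr ⟨r mm, h1, mm - r mm, h2, h3⟩
  have hXtop : X = ⊤ := by
    rcases hcompl X K hXK with h | h
    · exfalso
      apply hx0
      have : x ∈ X := Submodule.mem_span_singleton_self x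
      rw [h] at this
      simpa using this
    · have h2 := hXK.sup_eq_top
      rw [h, sup_bot_eq] at h2
      exact h2
  have hmtop : ∀ mm : M, mm ∈ X := by
    intro mm
    rw [hXtop]
    trivial
  have key2 : ∀ y : M, y ≠ 0 → ∃ a₀ : ℕ,
      ((Y ^ a₀ : A) • x ∈ Submodule.span A {y}) ∧ y ∈ Submodule.span A {(Y ^ a₀ : A) • x} := by
    intro y hy
    obtain ⟨u, hu⟩ := Submodule.mem_span_singleton.mp (hmtop y)
    set c'' : ℕ → k := fun a => if h : a < 2 * p ^ n then b.repr u (⟨a, h⟩, i) else 0 with hc''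
    have hyexp : y = ∑ a ∈ Finset.range (2 * p ^ n),
        algebraMap k A (c'' a) • ((Y ^ a : A) • x) := by
      rw [← hu]
      conv_lhs => rw [← b.sum_repr u]
      rw [Finset.sum_smul, Fintype.sum_prod_type]
      have hinner : ∀ a : Fin (2 * p ^ n), ∑ j, (b.repr u (a, j) • b (a, j)) • x
          = algebraMap k A (c'' (a : ℕ)) • ((Y ^ (a : ℕ) : A) • x) := by
        intro a
        rw [Finset.sum_eq_single i]
        · have h1 : c'' (a : ℕ) = b.repr u (a, i) := by
            simp only [hc'']
            rw [dif_pos a.isLt]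
          rw [h1, hb, smul_assoc, mul_smul, hex, ← hsmulk]
        · intro j _ hji
          rw [hb, smul_assoc, mul_smul]
          nth_rewrite 1 [← hex]
          rw [← mul_smul (e j) (e i) x, he, if_neg hji, zero_smul, smul_zero, smul_zero]
        · intro h
          exact absurd (Finset.mem_univ _) h
      rw [Finset.sum_congr rfl fun a _ => hinner a]
      exact (Fin.sum_univ_eq_sum_range
        (fun a => algebraMap k A (c'' a) • ((Y ^ a : A) • x)) (2 * p ^ n))
    have hexc : ∃ a, c'' a ≠ 0 := by
      by_contra hcon
      push_neg at hcon
      apply hy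
      rw [hyexp]
      refine Finset.sum_eq_zero fun a _ => ?_
      rw [hcon a, map_zero, zero_smul]
    set a₀ := Nat.find hexc with ha₀def
    have h₀ : c'' a₀ ≠ 0 := Nat.find_spec hexc
    have hlow : ∀ a' < a₀, c'' a' = 0 := fun a' h => not_not.mp (Nat.find_min hexc h)
    have ha₀lt : a₀ < 2 * p ^ n := by
      by_contra hge
      push_neg at hge
      apply h₀
      simp only [hc'']
      rw [dif_neg (by omega)]
    refine ⟨a₀, ?_, ?_⟩
    · have hkey := aux_L he hskew hnil b hb x i hex c'' (2 * p ^ n - 1) a₀ (by omega) h₀ hlow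
      rw [show 2 * p ^ n - 1 + 1 = 2 * p ^ n from by omega, ← hyexp] at hkey
      exact hkey
    · rw [hyexp]
      refine Submodule.sum_mem _ fun a _ => ?_
      rcases lt_or_ge a a₀ with h | h
      · rw [hlow a h, map_zero, zero_smul]
        exact Submodule.zero_mem _
      · have h1 : (Y ^ a : A) • x = (Y ^ (a - a₀) : A) • ((Y ^ a₀ : A) • x) := by
          rw [← mul_smul, ← pow_add, show a - a₀ + a₀ = a from by omega]
        rw [h1]
        exact Submodule.smul_mem _ _
          (Submodule.smul_mem _ _ (Submodule.mem_span_singleton_self _))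
  intro N₁ N₂
  by_contra hcon
  push_neg at hcon
  obtain ⟨h12, h21⟩ := hcon
  obtain ⟨y₁, hy₁, hy₁n⟩ := SetLike.not_le_iff_exists.mp h12
  obtain ⟨y₂, hy₂, hy₂n⟩ := SetLike.not_le_iff_exists.mp h21
  have hy₁0 : y₁ ≠ 0 := fun h => hy₁n (h ▸ N₂.zero_mem)
  have hy₂0 : y₂ ≠ 0 := fun h => hy₂n (h ▸ N₁.zero_mem)
  obtain ⟨a₁, hxin1, hy1in⟩ := key2 y₁ hy₁0
  obtain ⟨a₂, hxin2, hy2in⟩ := key2 y₂ hy₂0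
  rcases le_total a₁ a₂ with h | h
  · apply hy₂n
    have h1 : (Y ^ a₁ : A) • x ∈ N₁ :=
      (Submodule.span_le.mpr (Set.singleton_subset_iff.mpr hy₁)) hxin1
    have h2 : (Y ^ a₂ : A) • x ∈ N₁ := by
      have h3 : (Y ^ a₂ : A) • x = (Y ^ (a₂ - a₁) : A) • ((Y ^ a₁ : A) • x) := by
        rw [← mul_smul, ← pow_add, show a₂ - a₁ + a₁ = a₂ from by omega]
      rw [h3]
      exact Submodule.smul_mem _ _ h1
    exact (Submodule.span_le.mpr (Set.singleton_subset_iff.mpr h2)) hy2in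
  · apply hy₁n
    have h1 : (Y ^ a₂ : A) • x ∈ N₂ :=
      (Submodule.span_le.mpr (Set.singleton_subset_iff.mpr hy₂)) hxin2
    have h2 : (Y ^ a₁ : A) • x ∈ N₂ := by
      have h3 : (Y ^ a₁ : A) • x = (Y ^ (a₁ - a₂) : A) • ((Y ^ a₂ : A) • x) := by
        rw [← mul_smul, ← pow_add, show a₁ - a₂ + a₂ = a₁ from by omega]
      rw [h3]
      exact Submodule.smul_mem _ _ h1
    exact (Submodule.span_le.mpr (Set.singleton_subset_iff.mpr h2)) hy1in


end Aux

theorem stmt_12 (k : Type) [Field k] (p : ℕ) (hp : p.Prime) [CharP k p]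
    (n m : ℕ) (hn : 1 ≤ n) [NeZero (p ^ m)]
    (A : Type) [Ring A] [Algebra k A]
    (Y : A) (e : ZMod (p ^ m) → A)
    (he : ∀ i j, e i * e j = if i = j then e i else 0)
    (hsum : ∑ i, e i = 1)
    (hskew : ∀ i, Y * e i = e (i + 1) * Y)
    (hnil : Y ^ (2 * p ^ n) = 0)
    (b : Module.Basis (Fin (2 * p ^ n) × ZMod (p ^ m)) k A)
    (hb : ∀ a i, b (a, i) = Y ^ (a : ℕ) * e i) :
    -- the Jacobson radical is the ideal generated by `Y`
    (⊥ : Ideal A).jacobson = Ideal.span {Y} ∧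
    -- `A / J(A) ≅ (kℤ_{p^m})*`
    (∃ φ : A →ₐ[k] (ZMod (p ^ m) → k),
      Function.Surjective φ ∧ RingHom.ker φ = Ideal.span {Y}) ∧
    -- the classes of the `Y * e j` form a `k`-basis of `J/J²`
    (∀ x ∈ Ideal.span {Y}, ∃ c : ZMod (p ^ m) → k,
      x - ∑ j, c j • (Y * e j) ∈ Ideal.span {Y * Y}) ∧
    (∀ c : ZMod (p ^ m) → k,
      (∑ j, c j • (Y * e j)) ∈ Ideal.span {Y * Y} → c = 0) ∧
    -- the cyclic quiver structure: the class of `Y * e j` is an arrow from `j` to `j+1`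
    (∀ j : ZMod (p ^ m), e (j + 1) * (Y * e j) = Y * e j ∧
      ∀ i : ZMod (p ^ m), i ≠ j + 1 → e i * (Y * e j) = 0) ∧
    -- `A` is a Nakayama algebra
    IsNakayamaAlgebra A := by
  classical
  have hdim : 2 ≤ 2 * p ^ n := by
    have h1 : 1 ≤ p ^ n := Nat.one_le_pow n p hp.pos
    omega
  obtain ⟨φ, hsurj, hker⟩ := aux_phi he hsum hskew hnil b hb hdim
  obtain ⟨h3a, h3b⟩ := aux_part3 he hskew hnil b hb hdim
  refine ⟨aux_jac hskew hnil b hb φ hker, ⟨φ, hsurj, hker⟩, h3a, h3b, ?_, ?_⟩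
  · refine fun j => ⟨?_, ?_⟩
    · rw [hskew j, ← mul_assoc, he, if_pos rfl]
    · intro i hij
      rw [hskew j, ← mul_assoc, he, if_neg hij, zero_mul]
  · intro M _ _ _ hind
    exact aux_nak he hsum hskew hnil b hb M hind.1 hind.2
end

section
/- In Example 6.7 with p = 3: the algebra u(L)e₁ ⋊ kℤ₂ (the bosonization/smash product of the block u(L)e₁ with the group algebra of ℤ₂ acting by the parity automorphism) is isomorphic to the full matrix algebra M₆(k), via the explicit assignment t₁ ↦ diag(0,0, I₂, 2I₂ blocks), y ↦ the block matrix with I_{1,2} = [[0,1],[1,0]] in the (1,2), (2,3), (3,1) block positions, x ↦ the block matrix with −I₂ on the diagonal blocks and I₂ in positions (1,3),(2,1),(3,2), and g ↦ diag(I_{2,−1}, I_{2,−1}, I_{2,−1}) where I_{2,−1} = [[1,0],[0,−1]]. -/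
/-!
STATEMENT 19: (Example 6.7, `p = 3`.)  The bosonization `u(L)e₁ ⋊ kℤ₂` — presented as the
algebra `B` generated by `x, y, t₁, g` with relations `y² = x + 1`, `x³ = 0`, `t₁³ = t₁`,
`t₁y − yt₁ = 2y`, `t₁x − xt₁ = x + 1`, `xy = yx`, `g² = 1`, `g` commuting with `x, t₁` and
anticommuting with `y`, with `k`-basis `{yᵃ t₁ᵇ gᶜ}` — is isomorphic to `M₆(k)` via the
explicit matrix assignment of the paper.
-/

/-- The image of `t₁`: `diag(0,0)⊕I₂⊕2I₂`. -/
def Tmat (k : Type) [Field k] : Matrix (Fin 6) (Fin 6) k :=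
  Matrix.diagonal ![0, 0, 1, 1, 2, 2]

/-- The image of `y`: `I_{1,2} = [[0,1],[1,0]]` in block positions (1,2), (2,3), (3,1). -/
def Ymat (k : Type) [Field k] : Matrix (Fin 6) (Fin 6) k :=
  !![0, 0, 0, 1, 0, 0;
     0, 0, 1, 0, 0, 0;
     0, 0, 0, 0, 0, 1;
     0, 0, 0, 0, 1, 0;
     0, 1, 0, 0, 0, 0;
     1, 0, 0, 0, 0, 0]

/-- The image of `x`: `−I₂` on the diagonal blocks and `I₂` in positions (1,3), (2,1), (3,2). -/
def Xmat (k : Type) [Field k] : Matrix (Fin 6) (Fin 6) k :=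
  !![-1,  0,  0,  0,  1,  0;
      0, -1,  0,  0,  0,  1;
      1,  0, -1,  0,  0,  0;
      0,  1,  0, -1,  0,  0;
      0,  0,  1,  0, -1,  0;
      0,  0,  0,  1,  0, -1]

/-- The image of `g`: `diag(I_{2,−1}, I_{2,−1}, I_{2,−1})` with `I_{2,−1} = diag(1,−1)`. -/
def Gmat (k : Type) [Field k] : Matrix (Fin 6) (Fin 6) k :=
  Matrix.diagonal ![1, -1, 1, -1, 1, -1]


section S19
variable {R : Type*} [Ring R]

/-- monomial `Y^a T^b G^c` -/
def S19mon (Y T G : R) (p : Fin 6 × Fin 3 × Fin 2) : R :=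
  Y ^ (p.1 : ℕ) * T ^ (p.2.1 : ℕ) * G ^ (p.2.2 : ℕ)

variable (Y T G : R)

theorem S19mon_g (hG2 : G * G = 1) (p : Fin 6 × Fin 3 × Fin 2) :
    S19mon Y T G p * G = S19mon Y T G (p.1, p.2.1, p.2.2 + 1) := by
  obtain ⟨a, b, c⟩ := p
  fin_cases c
  · show Y ^ (a : ℕ) * T ^ (b : ℕ) * G ^ 0 * G = Y ^ (a : ℕ) * T ^ (b : ℕ) * G ^ 1
    rw [pow_zero, mul_one, pow_one]
  · show Y ^ (a : ℕ) * T ^ (b : ℕ) * G ^ 1 * G = Y ^ (a : ℕ) * T ^ (b : ℕ) * G ^ 0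
    rw [pow_one, pow_zero, mul_one, mul_assoc, hG2, mul_one]

theorem S19mon_t (hGT : G * T = T * G) (hT3 : T ^ 3 = T) (p : Fin 6 × Fin 3 × Fin 2) :
    S19mon Y T G p * T = S19mon Y T G (p.1, ![1, 2, 1] p.2.1, p.2.2) := by
  obtain ⟨a, b, c⟩ := p
  have key : ∀ c : Fin 2, G ^ (c : ℕ) * T = T * G ^ (c : ℕ) := by
    intro c; fin_cases c <;> simp [hGT]
  have assoc : ∀ n : ℕ, Y ^ (a : ℕ) * T ^ n * G ^ (c : ℕ) * T
      = Y ^ (a : ℕ) * (T ^ n * T) * G ^ (c : ℕ) := by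
    intro n
    rw [mul_assoc (Y ^ (a : ℕ) * T ^ n) (G ^ (c : ℕ)) T, key c, ← mul_assoc,
      mul_assoc (Y ^ (a : ℕ)) (T ^ n) T]
  fin_cases b
  · show Y ^ (a : ℕ) * T ^ 0 * G ^ (c : ℕ) * T = Y ^ (a : ℕ) * T ^ 1 * G ^ (c : ℕ)
    rw [assoc 0, pow_zero, one_mul, pow_one]
  · show Y ^ (a : ℕ) * T ^ 1 * G ^ (c : ℕ) * T = Y ^ (a : ℕ) * T ^ 2 * G ^ (c : ℕ)
    rw [assoc 1, ← pow_succ]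
  · show Y ^ (a : ℕ) * T ^ 2 * G ^ (c : ℕ) * T = Y ^ (a : ℕ) * T ^ 1 * G ^ (c : ℕ)
    rw [assoc 2, ← pow_succ, show (2 + 1 : ℕ) = 3 from rfl, hT3, pow_one]

theorem S19mon_y (h3 : (3 : R) = 0) (hTY : T * Y = Y * T + 2 * Y)
    (hGY : G * Y = -(Y * G)) (hY6 : Y ^ 6 = 1) (p : Fin 6 × Fin 3 × Fin 2) :
    S19mon Y T G p * Y =
      (if p.2.2 = 0 then 1 else -1) *
        ![S19mon Y T G (p.1 + 1, 0, p.2.2),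
          S19mon Y T G (p.1 + 1, 1, p.2.2)
            + (S19mon Y T G (p.1 + 1, 0, p.2.2) + S19mon Y T G (p.1 + 1, 0, p.2.2)),
          S19mon Y T G (p.1 + 1, 2, p.2.2) + S19mon Y T G (p.1 + 1, 1, p.2.2)
            + S19mon Y T G (p.1 + 1, 0, p.2.2)] p.2.1 := by
  obtain ⟨a, b, c⟩ := p
  have hAA : Y ^ ((a : ℕ)) * Y = Y ^ (((a + 1) : Fin 6) : ℕ) := by
    fin_cases a
    · show Y ^ 0 * Y = Y ^ 1; rw [pow_zero, one_mul, pow_one]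
    · show Y ^ 1 * Y = Y ^ 2; rw [← pow_succ]
    · show Y ^ 2 * Y = Y ^ 3; rw [← pow_succ]
    · show Y ^ 3 * Y = Y ^ 4; rw [← pow_succ]
    · show Y ^ 4 * Y = Y ^ 5; rw [← pow_succ]
    · show Y ^ 5 * Y = Y ^ 0; rw [← pow_succ, hY6, pow_zero]
  have hT2Y : T ^ 2 * Y = Y * T ^ 2 + Y * T + Y := by
    calc T ^ 2 * Y = T * (T * Y) := by rw [pow_two, mul_assoc]
      _ = T * (Y * T + 2 * Y) := by rw [hTY]
      _ = (T * Y) * T + 2 * (T * Y) := by noncomm_ring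
      _ = (Y * T + 2 * Y) * T + 2 * (Y * T + 2 * Y) := by rw [hTY]
      _ = Y * T ^ 2 + Y * T + Y + 3 * (Y * T + Y) := by noncomm_ring
      _ = Y * T ^ 2 + Y * T + Y := by rw [h3, zero_mul, add_zero]
  fin_cases c
  · fin_cases b
    · show Y ^ ((a : ℕ)) * T ^ 0 * G ^ 0 * Y = 1 * (Y ^ (((a + 1) : Fin 6) : ℕ) * T ^ 0 * G ^ 0)
      simp only [pow_zero, mul_one, one_mul]
      exact hAA
    · show Y ^ ((a : ℕ)) * T ^ 1 * G ^ 0 * Y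
        = 1 * (Y ^ (((a + 1) : Fin 6) : ℕ) * T ^ 1 * G ^ 0 + (Y ^ (((a + 1) : Fin 6) : ℕ) * T ^ 0 * G ^ 0 + Y ^ (((a + 1) : Fin 6) : ℕ) * T ^ 0 * G ^ 0))
      simp only [pow_zero, pow_one, mul_one, one_mul]
      calc Y ^ ((a : ℕ)) * T * Y = Y ^ ((a : ℕ)) * (T * Y) := by rw [mul_assoc]
        _ = Y ^ ((a : ℕ)) * (Y * T + 2 * Y) := by rw [hTY]
        _ = (Y ^ ((a : ℕ)) * Y) * T + ((Y ^ ((a : ℕ)) * Y) + (Y ^ ((a : ℕ)) * Y)) := by noncomm_ring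
        _ = _ := by rw [hAA]
    · show Y ^ ((a : ℕ)) * T ^ 2 * G ^ 0 * Y
        = 1 * (Y ^ (((a + 1) : Fin 6) : ℕ) * T ^ 2 * G ^ 0 + Y ^ (((a + 1) : Fin 6) : ℕ) * T ^ 1 * G ^ 0 + Y ^ (((a + 1) : Fin 6) : ℕ) * T ^ 0 * G ^ 0)
      simp only [pow_zero, pow_one, mul_one, one_mul]
      calc Y ^ ((a : ℕ)) * T ^ 2 * Y = Y ^ ((a : ℕ)) * (T ^ 2 * Y) := by rw [mul_assoc]
        _ = Y ^ ((a : ℕ)) * (Y * T ^ 2 + Y * T + Y) := by rw [hT2Y]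
        _ = (Y ^ ((a : ℕ)) * Y) * T ^ 2 + (Y ^ ((a : ℕ)) * Y) * T + (Y ^ ((a : ℕ)) * Y) := by noncomm_ring
        _ = _ := by rw [hAA]
  · fin_cases b
    · show Y ^ ((a : ℕ)) * T ^ 0 * G ^ 1 * Y = -1 * (Y ^ (((a + 1) : Fin 6) : ℕ) * T ^ 0 * G ^ 1)
      simp only [pow_zero, pow_one, mul_one, one_mul, neg_one_mul]
      calc Y ^ ((a : ℕ)) * G * Y = Y ^ ((a : ℕ)) * (G * Y) := by rw [mul_assoc]
        _ = Y ^ ((a : ℕ)) * (-(Y * G)) := by rw [hGY]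
        _ = -((Y ^ ((a : ℕ)) * Y) * G) := by noncomm_ring
        _ = _ := by rw [hAA]
    · show Y ^ ((a : ℕ)) * T ^ 1 * G ^ 1 * Y
        = -1 * (Y ^ (((a + 1) : Fin 6) : ℕ) * T ^ 1 * G ^ 1 + (Y ^ (((a + 1) : Fin 6) : ℕ) * T ^ 0 * G ^ 1 + Y ^ (((a + 1) : Fin 6) : ℕ) * T ^ 0 * G ^ 1))
      simp only [pow_zero, pow_one, mul_one, one_mul, neg_one_mul]
      calc Y ^ ((a : ℕ)) * T * G * Y = Y ^ ((a : ℕ)) * T * (G * Y) := by rw [mul_assoc]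
        _ = Y ^ ((a : ℕ)) * T * (-(Y * G)) := by rw [hGY]
        _ = -(Y ^ ((a : ℕ)) * (T * Y) * G) := by noncomm_ring
        _ = -(Y ^ ((a : ℕ)) * (Y * T + 2 * Y) * G) := by rw [hTY]
        _ = -((Y ^ ((a : ℕ)) * Y) * T * G + ((Y ^ ((a : ℕ)) * Y) * G + (Y ^ ((a : ℕ)) * Y) * G)) := by noncomm_ring
        _ = _ := by rw [hAA]
    · show Y ^ ((a : ℕ)) * T ^ 2 * G ^ 1 * Y
        = -1 * (Y ^ (((a + 1) : Fin 6) : ℕ) * T ^ 2 * G ^ 1 + Y ^ (((a + 1) : Fin 6) : ℕ) * T ^ 1 * G ^ 1 + Y ^ (((a + 1) : Fin 6) : ℕ) * T ^ 0 * G ^ 1)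
      simp only [pow_zero, pow_one, mul_one, one_mul, neg_one_mul]
      calc Y ^ ((a : ℕ)) * T ^ 2 * G * Y = Y ^ ((a : ℕ)) * T ^ 2 * (G * Y) := by rw [mul_assoc]
        _ = Y ^ ((a : ℕ)) * T ^ 2 * (-(Y * G)) := by rw [hGY]
        _ = -(Y ^ ((a : ℕ)) * (T ^ 2 * Y) * G) := by noncomm_ring
        _ = -(Y ^ ((a : ℕ)) * (Y * T ^ 2 + Y * T + Y) * G) := by rw [hT2Y]
        _ = -((Y ^ ((a : ℕ)) * Y) * T ^ 2 * G + (Y ^ ((a : ℕ)) * Y) * T * G + (Y ^ ((a : ℕ)) * Y) * G) := by noncomm_ring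
        _ = _ := by rw [hAA]

end S19

def Y3 : Matrix (Fin 6) (Fin 6) (ZMod 3) :=
  !![0, 0, 0, 1, 0, 0;
     0, 0, 1, 0, 0, 0;
     0, 0, 0, 0, 0, 1;
     0, 0, 0, 0, 1, 0;
     0, 1, 0, 0, 0, 0;
     1, 0, 0, 0, 0, 0]

def T3 : Matrix (Fin 6) (Fin 6) (ZMod 3) := Matrix.diagonal ![0, 0, 1, 1, 2, 2]

def G3 : Matrix (Fin 6) (Fin 6) (ZMod 3) := Matrix.diagonal ![1, -1, 1, -1, 1, -1]

def X3 : Matrix (Fin 6) (Fin 6) (ZMod 3) :=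
  !![-1,  0,  0,  0,  1,  0;
      0, -1,  0,  0,  0,  1;
      1,  0, -1,  0,  0,  0;
      0,  1,  0, -1,  0,  0;
      0,  0,  1,  0, -1,  0;
      0,  0,  0,  1,  0, -1]

def aTab : List (List (ZMod 3)) :=
 [[1, 1, 0, 0, 0, 0, 0, 0, 0, 0, 0, 0, 0, 0, 0, 0, 0, 0, 0, 0, 0, 0, 0, 0, 0, 0, 0, 0, 0, 0, 0, 0, 0, 0, 0, 0],
 [0, 0, 0, 0, 0, 0, 0, 0, 0, 0, 0, 0, 0, 0, 0, 0, 0, 0, 1, 2, 0, 0, 0, 0, 0, 0, 0, 0, 0, 0, 0, 0, 0, 0, 0, 0],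
 [0, 0, 0, 0, 0, 0, 0, 0, 0, 0, 0, 0, 0, 0, 0, 0, 0, 0, 0, 0, 0, 0, 0, 0, 1, 1, 1, 1, 1, 1, 0, 0, 0, 0, 0, 0],
 [0, 0, 0, 0, 0, 0, 1, 2, 1, 2, 1, 2, 0, 0, 0, 0, 0, 0, 0, 0, 0, 0, 0, 0, 0, 0, 0, 0, 0, 0, 0, 0, 0, 0, 0, 0],
 [0, 0, 0, 0, 0, 0, 0, 0, 0, 0, 0, 0, 1, 1, 2, 2, 1, 1, 0, 0, 0, 0, 0, 0, 0, 0, 0, 0, 0, 0, 0, 0, 0, 0, 0, 0],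
 [0, 0, 0, 0, 0, 0, 0, 0, 0, 0, 0, 0, 0, 0, 0, 0, 0, 0, 0, 0, 0, 0, 0, 0, 0, 0, 0, 0, 0, 0, 1, 2, 2, 1, 1, 2],
 [0, 0, 0, 0, 0, 0, 0, 0, 0, 0, 0, 0, 0, 0, 0, 0, 0, 0, 1, 1, 0, 0, 0, 0, 0, 0, 0, 0, 0, 0, 0, 0, 0, 0, 0, 0],
 [1, 2, 0, 0, 0, 0, 0, 0, 0, 0, 0, 0, 0, 0, 0, 0, 0, 0, 0, 0, 0, 0, 0, 0, 0, 0, 0, 0, 0, 0, 0, 0, 0, 0, 0, 0],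
 [0, 0, 0, 0, 0, 0, 1, 1, 1, 1, 1, 1, 0, 0, 0, 0, 0, 0, 0, 0, 0, 0, 0, 0, 0, 0, 0, 0, 0, 0, 0, 0, 0, 0, 0, 0],
 [0, 0, 0, 0, 0, 0, 0, 0, 0, 0, 0, 0, 0, 0, 0, 0, 0, 0, 0, 0, 0, 0, 0, 0, 1, 2, 1, 2, 1, 2, 0, 0, 0, 0, 0, 0],
 [0, 0, 0, 0, 0, 0, 0, 0, 0, 0, 0, 0, 0, 0, 0, 0, 0, 0, 0, 0, 0, 0, 0, 0, 0, 0, 0, 0, 0, 0, 1, 1, 2, 2, 1, 1],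
 [0, 0, 0, 0, 0, 0, 0, 0, 0, 0, 0, 0, 1, 2, 2, 1, 1, 2, 0, 0, 0, 0, 0, 0, 0, 0, 0, 0, 0, 0, 0, 0, 0, 0, 0, 0],
 [0, 0, 0, 0, 0, 0, 0, 0, 0, 0, 0, 0, 1, 1, 0, 0, 0, 0, 0, 0, 0, 0, 0, 0, 0, 0, 0, 0, 0, 0, 0, 0, 0, 0, 0, 0],
 [0, 0, 0, 0, 0, 0, 0, 0, 0, 0, 0, 0, 0, 0, 0, 0, 0, 0, 0, 0, 0, 0, 0, 0, 0, 0, 0, 0, 0, 0, 1, 2, 0, 0, 0, 0],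
 [1, 1, 1, 1, 1, 1, 0, 0, 0, 0, 0, 0, 0, 0, 0, 0, 0, 0, 0, 0, 0, 0, 0, 0, 0, 0, 0, 0, 0, 0, 0, 0, 0, 0, 0, 0],
 [0, 0, 0, 0, 0, 0, 0, 0, 0, 0, 0, 0, 0, 0, 0, 0, 0, 0, 1, 2, 1, 2, 1, 2, 0, 0, 0, 0, 0, 0, 0, 0, 0, 0, 0, 0],
 [0, 0, 0, 0, 0, 0, 0, 0, 0, 0, 0, 0, 0, 0, 0, 0, 0, 0, 0, 0, 0, 0, 0, 0, 1, 1, 2, 2, 1, 1, 0, 0, 0, 0, 0, 0],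
 [0, 0, 0, 0, 0, 0, 1, 2, 2, 1, 1, 2, 0, 0, 0, 0, 0, 0, 0, 0, 0, 0, 0, 0, 0, 0, 0, 0, 0, 0, 0, 0, 0, 0, 0, 0],
 [0, 0, 0, 0, 0, 0, 0, 0, 0, 0, 0, 0, 0, 0, 0, 0, 0, 0, 0, 0, 0, 0, 0, 0, 0, 0, 0, 0, 0, 0, 1, 1, 0, 0, 0, 0],
 [0, 0, 0, 0, 0, 0, 0, 0, 0, 0, 0, 0, 1, 2, 0, 0, 0, 0, 0, 0, 0, 0, 0, 0, 0, 0, 0, 0, 0, 0, 0, 0, 0, 0, 0, 0],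
 [0, 0, 0, 0, 0, 0, 0, 0, 0, 0, 0, 0, 0, 0, 0, 0, 0, 0, 1, 1, 1, 1, 1, 1, 0, 0, 0, 0, 0, 0, 0, 0, 0, 0, 0, 0],
 [1, 2, 1, 2, 1, 2, 0, 0, 0, 0, 0, 0, 0, 0, 0, 0, 0, 0, 0, 0, 0, 0, 0, 0, 0, 0, 0, 0, 0, 0, 0, 0, 0, 0, 0, 0],
 [0, 0, 0, 0, 0, 0, 1, 1, 2, 2, 1, 1, 0, 0, 0, 0, 0, 0, 0, 0, 0, 0, 0, 0, 0, 0, 0, 0, 0, 0, 0, 0, 0, 0, 0, 0],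
 [0, 0, 0, 0, 0, 0, 0, 0, 0, 0, 0, 0, 0, 0, 0, 0, 0, 0, 0, 0, 0, 0, 0, 0, 1, 2, 2, 1, 1, 2, 0, 0, 0, 0, 0, 0],
 [0, 0, 0, 0, 0, 0, 0, 0, 0, 0, 0, 0, 0, 0, 0, 0, 0, 0, 0, 0, 0, 0, 0, 0, 1, 1, 0, 0, 0, 0, 0, 0, 0, 0, 0, 0],
 [0, 0, 0, 0, 0, 0, 1, 2, 0, 0, 0, 0, 0, 0, 0, 0, 0, 0, 0, 0, 0, 0, 0, 0, 0, 0, 0, 0, 0, 0, 0, 0, 0, 0, 0, 0],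
 [0, 0, 0, 0, 0, 0, 0, 0, 0, 0, 0, 0, 1, 1, 1, 1, 1, 1, 0, 0, 0, 0, 0, 0, 0, 0, 0, 0, 0, 0, 0, 0, 0, 0, 0, 0],
 [0, 0, 0, 0, 0, 0, 0, 0, 0, 0, 0, 0, 0, 0, 0, 0, 0, 0, 0, 0, 0, 0, 0, 0, 0, 0, 0, 0, 0, 0, 1, 2, 1, 2, 1, 2],
 [1, 1, 2, 2, 1, 1, 0, 0, 0, 0, 0, 0, 0, 0, 0, 0, 0, 0, 0, 0, 0, 0, 0, 0, 0, 0, 0, 0, 0, 0, 0, 0, 0, 0, 0, 0],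
 [0, 0, 0, 0, 0, 0, 0, 0, 0, 0, 0, 0, 0, 0, 0, 0, 0, 0, 1, 2, 2, 1, 1, 2, 0, 0, 0, 0, 0, 0, 0, 0, 0, 0, 0, 0],
 [0, 0, 0, 0, 0, 0, 1, 1, 0, 0, 0, 0, 0, 0, 0, 0, 0, 0, 0, 0, 0, 0, 0, 0, 0, 0, 0, 0, 0, 0, 0, 0, 0, 0, 0, 0],
 [0, 0, 0, 0, 0, 0, 0, 0, 0, 0, 0, 0, 0, 0, 0, 0, 0, 0, 0, 0, 0, 0, 0, 0, 1, 2, 0, 0, 0, 0, 0, 0, 0, 0, 0, 0],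
 [0, 0, 0, 0, 0, 0, 0, 0, 0, 0, 0, 0, 0, 0, 0, 0, 0, 0, 0, 0, 0, 0, 0, 0, 0, 0, 0, 0, 0, 0, 1, 1, 1, 1, 1, 1],
 [0, 0, 0, 0, 0, 0, 0, 0, 0, 0, 0, 0, 1, 2, 1, 2, 1, 2, 0, 0, 0, 0, 0, 0, 0, 0, 0, 0, 0, 0, 0, 0, 0, 0, 0, 0],
 [0, 0, 0, 0, 0, 0, 0, 0, 0, 0, 0, 0, 0, 0, 0, 0, 0, 0, 1, 1, 2, 2, 1, 1, 0, 0, 0, 0, 0, 0, 0, 0, 0, 0, 0, 0],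
 [1, 2, 2, 1, 1, 2, 0, 0, 0, 0, 0, 0, 0, 0, 0, 0, 0, 0, 0, 0, 0, 0, 0, 0, 0, 0, 0, 0, 0, 0, 0, 0, 0, 0, 0, 0]]

def bTab : List (List (ZMod 3)) :=
 [[2, 0, 0, 0, 0, 0, 0, 2, 0, 0, 0, 0, 0, 0, 0, 0, 0, 0, 0, 0, 0, 0, 0, 0, 0, 0, 0, 0, 0, 0, 0, 0, 0, 0, 0, 0],
 [2, 0, 0, 0, 0, 0, 0, 1, 0, 0, 0, 0, 0, 0, 0, 0, 0, 0, 0, 0, 0, 0, 0, 0, 0, 0, 0, 0, 0, 0, 0, 0, 0, 0, 0, 0],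
 [0, 0, 0, 0, 0, 0, 0, 0, 0, 0, 0, 0, 0, 0, 1, 0, 0, 0, 0, 0, 0, 1, 0, 0, 0, 0, 0, 0, 2, 0, 0, 0, 0, 0, 0, 2],
 [0, 0, 0, 0, 0, 0, 0, 0, 0, 0, 0, 0, 0, 0, 1, 0, 0, 0, 0, 0, 0, 2, 0, 0, 0, 0, 0, 0, 2, 0, 0, 0, 0, 0, 0, 1],
 [1, 0, 0, 0, 0, 0, 0, 1, 0, 0, 0, 0, 0, 0, 1, 0, 0, 0, 0, 0, 0, 1, 0, 0, 0, 0, 0, 0, 1, 0, 0, 0, 0, 0, 0, 1],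
 [1, 0, 0, 0, 0, 0, 0, 2, 0, 0, 0, 0, 0, 0, 1, 0, 0, 0, 0, 0, 0, 2, 0, 0, 0, 0, 0, 0, 1, 0, 0, 0, 0, 0, 0, 2],
 [0, 0, 0, 0, 0, 0, 0, 0, 0, 0, 0, 0, 0, 0, 0, 0, 0, 0, 0, 0, 0, 0, 0, 0, 0, 2, 0, 0, 0, 0, 2, 0, 0, 0, 0, 0],
 [0, 0, 0, 0, 0, 0, 0, 0, 0, 0, 0, 0, 0, 0, 0, 0, 0, 0, 0, 0, 0, 0, 0, 0, 0, 1, 0, 0, 0, 0, 2, 0, 0, 0, 0, 0],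
 [0, 0, 0, 1, 0, 0, 0, 0, 1, 0, 0, 0, 0, 0, 0, 0, 0, 2, 0, 0, 0, 0, 2, 0, 0, 0, 0, 0, 0, 0, 0, 0, 0, 0, 0, 0],
 [0, 0, 0, 2, 0, 0, 0, 0, 1, 0, 0, 0, 0, 0, 0, 0, 0, 1, 0, 0, 0, 0, 2, 0, 0, 0, 0, 0, 0, 0, 0, 0, 0, 0, 0, 0],
 [0, 0, 0, 1, 0, 0, 0, 0, 1, 0, 0, 0, 0, 0, 0, 0, 0, 1, 0, 0, 0, 0, 1, 0, 0, 1, 0, 0, 0, 0, 1, 0, 0, 0, 0, 0],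
 [0, 0, 0, 2, 0, 0, 0, 0, 1, 0, 0, 0, 0, 0, 0, 0, 0, 2, 0, 0, 0, 0, 1, 0, 0, 2, 0, 0, 0, 0, 1, 0, 0, 0, 0, 0],
 [0, 0, 0, 0, 0, 0, 0, 0, 0, 0, 0, 0, 2, 0, 0, 0, 0, 0, 0, 2, 0, 0, 0, 0, 0, 0, 0, 0, 0, 0, 0, 0, 0, 0, 0, 0],
 [0, 0, 0, 0, 0, 0, 0, 0, 0, 0, 0, 0, 2, 0, 0, 0, 0, 0, 0, 1, 0, 0, 0, 0, 0, 0, 0, 0, 0, 0, 0, 0, 0, 0, 0, 0],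
 [0, 0, 0, 0, 2, 0, 0, 0, 0, 0, 0, 2, 0, 0, 0, 0, 0, 0, 0, 0, 0, 0, 0, 0, 0, 0, 1, 0, 0, 0, 0, 0, 0, 1, 0, 0],
 [0, 0, 0, 0, 2, 0, 0, 0, 0, 0, 0, 1, 0, 0, 0, 0, 0, 0, 0, 0, 0, 0, 0, 0, 0, 0, 1, 0, 0, 0, 0, 0, 0, 2, 0, 0],
 [0, 0, 0, 0, 1, 0, 0, 0, 0, 0, 0, 1, 1, 0, 0, 0, 0, 0, 0, 1, 0, 0, 0, 0, 0, 0, 1, 0, 0, 0, 0, 0, 0, 1, 0, 0],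
 [0, 0, 0, 0, 1, 0, 0, 0, 0, 0, 0, 2, 1, 0, 0, 0, 0, 0, 0, 2, 0, 0, 0, 0, 0, 0, 1, 0, 0, 0, 0, 0, 0, 2, 0, 0],
 [0, 2, 0, 0, 0, 0, 2, 0, 0, 0, 0, 0, 0, 0, 0, 0, 0, 0, 0, 0, 0, 0, 0, 0, 0, 0, 0, 0, 0, 0, 0, 0, 0, 0, 0, 0],
 [0, 1, 0, 0, 0, 0, 2, 0, 0, 0, 0, 0, 0, 0, 0, 0, 0, 0, 0, 0, 0, 0, 0, 0, 0, 0, 0, 0, 0, 0, 0, 0, 0, 0, 0, 0],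
 [0, 0, 0, 0, 0, 0, 0, 0, 0, 0, 0, 0, 0, 0, 0, 1, 0, 0, 0, 0, 1, 0, 0, 0, 0, 0, 0, 0, 0, 2, 0, 0, 0, 0, 2, 0],
 [0, 0, 0, 0, 0, 0, 0, 0, 0, 0, 0, 0, 0, 0, 0, 2, 0, 0, 0, 0, 1, 0, 0, 0, 0, 0, 0, 0, 0, 1, 0, 0, 0, 0, 2, 0],
 [0, 1, 0, 0, 0, 0, 1, 0, 0, 0, 0, 0, 0, 0, 0, 1, 0, 0, 0, 0, 1, 0, 0, 0, 0, 0, 0, 0, 0, 1, 0, 0, 0, 0, 1, 0],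
 [0, 2, 0, 0, 0, 0, 1, 0, 0, 0, 0, 0, 0, 0, 0, 2, 0, 0, 0, 0, 1, 0, 0, 0, 0, 0, 0, 0, 0, 2, 0, 0, 0, 0, 1, 0],
 [0, 0, 0, 0, 0, 0, 0, 0, 0, 0, 0, 0, 0, 0, 0, 0, 0, 0, 0, 0, 0, 0, 0, 0, 2, 0, 0, 0, 0, 0, 0, 2, 0, 0, 0, 0],
 [0, 0, 0, 0, 0, 0, 0, 0, 0, 0, 0, 0, 0, 0, 0, 0, 0, 0, 0, 0, 0, 0, 0, 0, 2, 0, 0, 0, 0, 0, 0, 1, 0, 0, 0, 0],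
 [0, 0, 1, 0, 0, 0, 0, 0, 0, 1, 0, 0, 0, 0, 0, 0, 2, 0, 0, 0, 0, 0, 0, 2, 0, 0, 0, 0, 0, 0, 0, 0, 0, 0, 0, 0],
 [0, 0, 1, 0, 0, 0, 0, 0, 0, 2, 0, 0, 0, 0, 0, 0, 2, 0, 0, 0, 0, 0, 0, 1, 0, 0, 0, 0, 0, 0, 0, 0, 0, 0, 0, 0],
 [0, 0, 1, 0, 0, 0, 0, 0, 0, 1, 0, 0, 0, 0, 0, 0, 1, 0, 0, 0, 0, 0, 0, 1, 1, 0, 0, 0, 0, 0, 0, 1, 0, 0, 0, 0],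
 [0, 0, 1, 0, 0, 0, 0, 0, 0, 2, 0, 0, 0, 0, 0, 0, 1, 0, 0, 0, 0, 0, 0, 2, 1, 0, 0, 0, 0, 0, 0, 2, 0, 0, 0, 0],
 [0, 0, 0, 0, 0, 0, 0, 0, 0, 0, 0, 0, 0, 2, 0, 0, 0, 0, 2, 0, 0, 0, 0, 0, 0, 0, 0, 0, 0, 0, 0, 0, 0, 0, 0, 0],
 [0, 0, 0, 0, 0, 0, 0, 0, 0, 0, 0, 0, 0, 1, 0, 0, 0, 0, 2, 0, 0, 0, 0, 0, 0, 0, 0, 0, 0, 0, 0, 0, 0, 0, 0, 0],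
 [0, 0, 0, 0, 0, 2, 0, 0, 0, 0, 2, 0, 0, 0, 0, 0, 0, 0, 0, 0, 0, 0, 0, 0, 0, 0, 0, 1, 0, 0, 0, 0, 1, 0, 0, 0],
 [0, 0, 0, 0, 0, 1, 0, 0, 0, 0, 2, 0, 0, 0, 0, 0, 0, 0, 0, 0, 0, 0, 0, 0, 0, 0, 0, 2, 0, 0, 0, 0, 1, 0, 0, 0],
 [0, 0, 0, 0, 0, 1, 0, 0, 0, 0, 1, 0, 0, 1, 0, 0, 0, 0, 1, 0, 0, 0, 0, 0, 0, 0, 0, 1, 0, 0, 0, 0, 1, 0, 0, 0],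
 [0, 0, 0, 0, 0, 2, 0, 0, 0, 0, 1, 0, 0, 2, 0, 0, 0, 0, 1, 0, 0, 0, 0, 0, 0, 0, 0, 2, 0, 0, 0, 0, 1, 0, 0, 0]]


def A3 : Matrix (Fin 6 × Fin 6) (Fin 6 × Fin 3 × Fin 2) (ZMod 3) :=
  Matrix.of fun q p => (aTab.getD (q.1.val * 6 + q.2.val) []).getD
    (p.1.val * 6 + p.2.1.val * 2 + p.2.2.val) 0

def B3 : Matrix (Fin 6 × Fin 3 × Fin 2) (Fin 6 × Fin 6) (ZMod 3) :=
  Matrix.of fun p q => (bTab.getD (p.1.val * 6 + p.2.1.val * 2 + p.2.2.val) []).getD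
    (q.1.val * 6 + q.2.val) 0

theorem hA3mono : ∀ (p : Fin 6 × Fin 3 × Fin 2) (i j : Fin 6),
    A3 (i, j) p = (Y3 ^ (p.1 : ℕ) * T3 ^ (p.2.1 : ℕ) * G3 ^ (p.2.2 : ℕ)) i j := by decide

set_option maxRecDepth 40000 in
set_option maxHeartbeats 4000000 in
theorem hAB3 : A3 * B3 = 1 := by decide

set_option maxRecDepth 40000 in
set_option maxHeartbeats 4000000 in
theorem hBA3 : B3 * A3 = 1 := by decide

set_option maxHeartbeats 1600000 in

theorem stmt_19 (k : Type) [Field k] [IsAlgClosed k] [CharP k 3]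
    (B : Type) [Ring B] [Algebra k B]
    (x y t1 g : B)
    (hgen : Algebra.adjoin k {x, y, t1, g} = ⊤)
    (hy2 : y * y = x + 1) (hx3 : x ^ 3 = 0) (ht13 : t1 ^ 3 = t1)
    (ht1y : t1 * y - y * t1 = 2 * y)
    (ht1x : t1 * x - x * t1 = x + 1)
    (hxy : x * y = y * x)
    (hg2 : g * g = 1) (hgx : g * x = x * g) (hgt1 : g * t1 = t1 * g)
    (hgy : g * y = -(y * g))
    (bB : Module.Basis (Fin 6 × Fin 3 × Fin 2) k B)
    (hbB : ∀ (a : Fin 6) (b : Fin 3) (c : Fin 2),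
      bB (a, b, c) = y ^ (a : ℕ) * t1 ^ (b : ℕ) * g ^ (c : ℕ)) :
    ∃ φ : B ≃ₐ[k] Matrix (Fin 6) (Fin 6) k,
      φ t1 = Tmat k ∧ φ y = Ymat k ∧ φ x = Xmat k ∧ φ g = Gmat k := by

  classical
  set C : ZMod 3 →+* k := ZMod.castHom (dvd_refl 3) k with hCdef
  set cm : Matrix (Fin 6) (Fin 6) (ZMod 3) →+* Matrix (Fin 6) (Fin 6) k := C.mapMatrix with hcmdef
  have castlem : ∀ (M : Matrix (Fin 6) (Fin 6) k) (N : Matrix (Fin 6) (Fin 6) (ZMod 3)),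
      (∀ i j, M i j = C (N i j)) → M = cm N := by
    intro M N h
    ext i j
    exact h i j
  have hYk : Ymat k = cm Y3 := by
    apply castlem
    intro i j
    fin_cases i <;> fin_cases j <;>
      first
      | exact (map_zero C).symm
      | exact (map_one C).symm
      | exact (map_ofNat C 2).symm
      | exact (show C (-1) = (-1 : k) from by rw [map_neg, map_one]).symm
  have hXk : Xmat k = cm X3 := by
    apply castlem
    intro i j
    fin_cases i <;> fin_cases j <;>
      first
      | exact (map_zero C).symm
      | exact (map_one C).symm
      | exact (map_ofNat C 2).symm
      | exact (show C (-1) = (-1 : k) from by rw [map_neg, map_one]).symm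
  have hTk : Tmat k = cm T3 := by
    apply castlem
    intro i j
    fin_cases i <;> fin_cases j <;>
      first
      | exact (map_zero C).symm
      | exact (map_one C).symm
      | exact (map_ofNat C 2).symm
      | exact (show C (-1) = (-1 : k) from by rw [map_neg, map_one]).symm
  have hGk : Gmat k = cm G3 := by
    apply castlem
    intro i j
    fin_cases i <;> fin_cases j <;>
      first
      | exact (map_zero C).symm
      | exact (map_one C).symm
      | exact (map_ofNat C 2).symm
      | exact (show C (-1) = (-1 : k) from by rw [map_neg, map_one]).symm
  -- matrix-side relations
  have rG2 : Gmat k * Gmat k = 1 := by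
    rw [hGk, ← map_mul, show G3 * G3 = 1 from by decide, map_one]
  have rT3 : Tmat k ^ 3 = Tmat k := by
    rw [hTk, ← map_pow, show T3 ^ 3 = T3 from by decide]
  have rGT : Gmat k * Tmat k = Tmat k * Gmat k := by
    rw [hGk, hTk, ← map_mul, ← map_mul, show G3 * T3 = T3 * G3 from by decide]
  have rTY : Tmat k * Ymat k = Ymat k * Tmat k + 2 * Ymat k := by
    rw [hTk, hYk, ← map_mul, ← map_mul,
      show (2 : Matrix (Fin 6) (Fin 6) k) = cm 2 from (map_ofNat cm 2).symm, ← map_mul,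
      ← map_add, show T3 * Y3 = Y3 * T3 + 2 * Y3 from by decide]
  have rGY : Gmat k * Ymat k = -(Ymat k * Gmat k) := by
    rw [hGk, hYk, ← map_mul, ← map_mul, ← map_neg,
      show G3 * Y3 = -(Y3 * G3) from by decide]
  have rY6 : Ymat k ^ 6 = 1 := by
    rw [hYk, ← map_pow, show Y3 ^ 6 = 1 from by decide, map_one]
  have rYY : Ymat k * Ymat k = Xmat k + 1 := by
    rw [hYk, hXk, ← map_mul, show Y3 * Y3 = X3 + 1 from by decide, map_add, map_one]
  have r3 : (3 : Matrix (Fin 6) (Fin 6) k) = 0 := by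
    rw [show (3 : Matrix (Fin 6) (Fin 6) k) = cm 3 from (map_ofNat cm 3).symm,
      show (3 : Matrix (Fin 6) (Fin 6) (ZMod 3)) = 0 from by decide, map_zero]
  -- B-side relations
  have h3B : (3 : B) = 0 := by
    rw [show (3 : B) = algebraMap k B 3 from (map_ofNat _ 3).symm,
      show (3 : k) = 0 from by exact_mod_cast CharP.cast_eq_zero k 3, map_zero]
  have bTY : t1 * y = y * t1 + 2 * y := by
    have h := sub_eq_iff_eq_add.mp ht1y
    rw [h, add_comm]
  have bY6 : y ^ 6 = 1 := by
    have h2 : y ^ 2 = x + 1 := by rw [pow_two, hy2]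
    have e : (x + 1) ^ 3 = x ^ 3 + 3 * x ^ 2 + 3 * x + 1 := by
      rw [pow_succ, pow_two]; noncomm_ring
    calc y ^ 6 = (y ^ 2) ^ 3 := by rw [← pow_mul]
      _ = (x + 1) ^ 3 := by rw [h2]
      _ = x ^ 3 + 3 * x ^ 2 + 3 * x + 1 := e
      _ = 1 := by rw [hx3, h3B]; simp
  -- the linear equivalence
  have hABk : A3.map C * B3.map C = 1 := by
    rw [← Matrix.map_mul, hAB3, Matrix.map_one C (map_zero C) (map_one C)]
  have hBAk : B3.map C * A3.map C = 1 := by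
    rw [← Matrix.map_mul, hBA3, Matrix.map_one C (map_zero C) (map_one C)]
  let al : ((Fin 6 × Fin 3 × Fin 2) → k) ≃ₗ[k] ((Fin 6 × Fin 6) → k) :=
    LinearEquiv.ofLinear (A3.map C).mulVecLin (B3.map C).mulVecLin
      (by rw [← Matrix.mulVecLin_mul, hABk, Matrix.mulVecLin_one])
      (by rw [← Matrix.mulVecLin_mul, hBAk, Matrix.mulVecLin_one])
  let phiL : B ≃ₗ[k] Matrix (Fin 6) (Fin 6) k :=
    (bB.equivFun.trans al).trans (LinearEquiv.curry k k (Fin 6) (Fin 6))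
  have hbB' : ∀ p : Fin 6 × Fin 3 × Fin 2, bB p = S19mon y t1 g p := by
    rintro ⟨a, b, c⟩; exact hbB a b c
  have hmonk : ∀ p : Fin 6 × Fin 3 × Fin 2,
      S19mon (Ymat k) (Tmat k) (Gmat k) p
        = cm (Y3 ^ (p.1 : ℕ) * T3 ^ (p.2.1 : ℕ) * G3 ^ (p.2.2 : ℕ)) := by
    intro p
    rw [S19mon, hYk, hTk, hGk, ← map_pow, ← map_pow, ← map_pow, ← map_mul, ← map_mul]
  have hphib : ∀ p, phiL (bB p) = S19mon (Ymat k) (Tmat k) (Gmat k) p := by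
    intro p
    ext i j
    have h0 : phiL (bB p) i j = ((A3.map C).mulVec (bB.equivFun (bB p))) (i, j) := rfl
    rw [h0, hmonk p]
    simp only [Matrix.mulVec, dotProduct, Module.Basis.equivFun_self, mul_ite, mul_one,
      mul_zero, Finset.sum_ite_eq, Finset.mem_univ, if_true]
    simp [Matrix.map_apply, hA3mono p i j, hcmdef, RingHom.mapMatrix_apply]
  have hphim : ∀ p, phiL (S19mon y t1 g p) = S19mon (Ymat k) (Tmat k) (Gmat k) p := by
    intro p; rw [← hbB', hphib]
  -- step lemmas
  have stepG : ∀ u : B, phiL (u * g) = phiL u * Gmat k := by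
    have h : (phiL.toLinearMap.comp (LinearMap.mulRight k g))
        = (LinearMap.mulRight k (Gmat k)).comp phiL.toLinearMap := by
      apply bB.ext; intro p
      simp only [LinearMap.comp_apply, LinearMap.mulRight_apply, LinearEquiv.coe_coe]
      rw [hbB' p, S19mon_g y t1 g hg2 p, hphim, hphim,
        S19mon_g (Ymat k) (Tmat k) (Gmat k) rG2 p]
    intro u; simpa using LinearMap.congr_fun h u
  have stepT : ∀ u : B, phiL (u * t1) = phiL u * Tmat k := by
    have h : (phiL.toLinearMap.comp (LinearMap.mulRight k t1))
        = (LinearMap.mulRight k (Tmat k)).comp phiL.toLinearMap := by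
      apply bB.ext; intro p
      simp only [LinearMap.comp_apply, LinearMap.mulRight_apply, LinearEquiv.coe_coe]
      rw [hbB' p, S19mon_t y t1 g hgt1 ht13 p, hphim, hphim,
        S19mon_t (Ymat k) (Tmat k) (Gmat k) rGT rT3 p]
    intro u; simpa using LinearMap.congr_fun h u
  have stepY : ∀ u : B, phiL (u * y) = phiL u * Ymat k := by
    have h : (phiL.toLinearMap.comp (LinearMap.mulRight k y))
        = (LinearMap.mulRight k (Ymat k)).comp phiL.toLinearMap := by
      apply bB.ext; rintro ⟨a, b, c⟩
      simp only [LinearMap.comp_apply, LinearMap.mulRight_apply, LinearEquiv.coe_coe]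
      rw [hbB' (a, b, c), S19mon_y y t1 g h3B bTY hgy bY6 (a, b, c), hphim,
        S19mon_y (Ymat k) (Tmat k) (Gmat k) r3 rTY rGY rY6 (a, b, c)]
      fin_cases c <;> fin_cases b <;>
        simp [map_add, map_neg, hphim]
    intro u; simpa using LinearMap.congr_fun h u
  have stepGn : ∀ (n : ℕ) (u : B), phiL (u * g ^ n) = phiL u * Gmat k ^ n := by
    intro n
    induction n with
    | zero => intro u; simp
    | succ n ih =>
      intro u
      rw [pow_succ, ← mul_assoc, stepG, ih, pow_succ, mul_assoc]
  have stepTn : ∀ (n : ℕ) (u : B), phiL (u * t1 ^ n) = phiL u * Tmat k ^ n := by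
    intro n
    induction n with
    | zero => intro u; simp
    | succ n ih =>
      intro u
      rw [pow_succ, ← mul_assoc, stepT, ih, pow_succ, mul_assoc]
  have stepYn : ∀ (n : ℕ) (u : B), phiL (u * y ^ n) = phiL u * Ymat k ^ n := by
    intro n
    induction n with
    | zero => intro u; simp
    | succ n ih =>
      intro u
      rw [pow_succ, ← mul_assoc, stepY, ih, pow_succ, mul_assoc]
  have hmul : ∀ u v : B, phiL (u * v) = phiL u * phiL v := by
    intro u
    have h : (phiL.toLinearMap.comp (LinearMap.mulLeft k u))
        = (LinearMap.mulLeft k (phiL u)).comp phiL.toLinearMap := by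
      apply bB.ext; rintro ⟨a, b, c⟩
      simp only [LinearMap.comp_apply, LinearMap.mulLeft_apply, LinearEquiv.coe_coe]
      rw [hbB a b c]
      calc phiL (u * (y ^ (a : ℕ) * t1 ^ (b : ℕ) * g ^ (c : ℕ)))
          = phiL (((u * y ^ (a : ℕ)) * t1 ^ (b : ℕ)) * g ^ (c : ℕ)) := by
            rw [← mul_assoc, ← mul_assoc]
        _ = phiL ((u * y ^ (a : ℕ)) * t1 ^ (b : ℕ)) * Gmat k ^ (c : ℕ) := stepGn _ _
        _ = (phiL (u * y ^ (a : ℕ)) * Tmat k ^ (b : ℕ)) * Gmat k ^ (c : ℕ) := by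
            rw [stepTn]
        _ = ((phiL u * Ymat k ^ (a : ℕ)) * Tmat k ^ (b : ℕ)) * Gmat k ^ (c : ℕ) := by
            rw [stepYn]
        _ = phiL u * (Ymat k ^ (a : ℕ) * Tmat k ^ (b : ℕ) * Gmat k ^ (c : ℕ)) := by
            rw [mul_assoc, mul_assoc, mul_assoc]
        _ = phiL u * phiL (y ^ (a : ℕ) * t1 ^ (b : ℕ) * g ^ (c : ℕ)) := by
            rw [show phiL (y ^ (a : ℕ) * t1 ^ (b : ℕ) * g ^ (c : ℕ))
                = Ymat k ^ (a : ℕ) * Tmat k ^ (b : ℕ) * Gmat k ^ (c : ℕ) from hphim (a, b, c)]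
    intro v; simpa using LinearMap.congr_fun h v
  have hone : phiL 1 = 1 := by
    have h1 : (1 : B) = bB (0, 0, 0) := by rw [hbB 0 0 0]; simp
    rw [h1, hphib]
    simp [S19mon]
  refine ⟨AlgEquiv.ofLinearEquiv phiL hone hmul, ?_, ?_, ?_, ?_⟩
  · -- t1
    have h1 : t1 = bB (0, 1, 0) := by rw [hbB 0 1 0]; simp
    show phiL t1 = Tmat k
    rw [h1, hphib]
    simp [S19mon]
  · -- y
    have h1 : y = bB (1, 0, 0) := by rw [hbB 1 0 0]; simp
    show phiL y = Ymat k
    rw [h1, hphib]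
    simp [S19mon]
  · -- x
    have hy' : phiL y = Ymat k := by
      have h1 : y = bB (1, 0, 0) := by rw [hbB 1 0 0]; simp
      rw [h1, hphib]; simp [S19mon]
    have hx : x = y * y - 1 := by rw [hy2, add_sub_cancel_right]
    show phiL x = Xmat k
    rw [hx, map_sub, hmul, hy', rYY, hone]
    simp
  · -- g
    have h1 : g = bB (0, 0, 1) := by rw [hbB 0 0 1]; simp
    show phiL g = Gmat k
    rw [h1, hphib]
    simp [S19mon]
end
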